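/- arXiv:1101.0147 — 5 statements merged into one kernel-verified Lean document; each statement's English description precedes it below -/
import Mathlib

section
/- Let 0 < d ≤ n and let K be a d-set in ℝⁿ with associated mass distribution μ_K (so that c₁ rᵈ ≤ μ_K(B_r(x)) ≤ c₂ rᵈ for all r ∈ (0,1], x ∈ K). Then ∫_{ℝⁿ} f(|x − y|) dμ_K(x) ≈ ∫₀^{diam K} r^{d−1} f(r) dr, with equivalence constants independent of y ∈ K and of the function f, for all y ∈ K and all non-increasing continuous functions f : ℝ⁺ → ℝ⁺. -/
open MeasureTheory Metric Set
open scoped ENNReal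

noncomputable section

section Helpers

open Filter Topology
open scoped ENNReal

private lemma pow_rpow_comm' {q : ℝ} (hq : 0 ≤ q) (d : ℝ) (k : ℕ) :
    (q ^ k) ^ d = (q ^ d) ^ k := by
  rw [← Real.rpow_natCast q k, ← Real.rpow_natCast (q ^ d) k,
    ← Real.rpow_mul hq, ← Real.rpow_mul hq, mul_comm]

private lemma tendsto_geom' (c : ℝ) {q : ℝ} (h0 : 0 ≤ q) (h1 : q < 1) :
    Tendsto (fun k : ℕ => ENNReal.ofReal (c * q ^ k)) atTop (𝓝 0) := by
  have h : Tendsto (fun k : ℕ => c * q ^ k) atTop (𝓝 (c * 0)) :=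
    (tendsto_pow_atTop_nhds_zero_of_lt_one h0 h1).const_mul c
  rw [mul_zero] at h
  simpa using ENNReal.tendsto_ofReal h

private lemma eq_zero_of_le_ofReal_rpow' {m : ℝ≥0∞} {c d : ℝ} (hd : 0 < d)
    (h : ∀ r : ℝ, r ∈ Set.Ioc (0:ℝ) 1 → m ≤ ENNReal.ofReal (c * r ^ d)) : m = 0 := by
  have hq0 : (0:ℝ) ≤ (2:ℝ)⁻¹ ^ d := Real.rpow_nonneg (by norm_num) d
  have hq1 : ((2:ℝ)⁻¹) ^ d < 1 := Real.rpow_lt_one (by norm_num) (by norm_num) hd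
  have key : ∀ k : ℕ, m ≤ ENNReal.ofReal ((c * (2:ℝ)⁻¹ ^ d) * ((2:ℝ)⁻¹ ^ d) ^ k) := by
    intro k
    have h1 : ((2:ℝ)⁻¹) ^ (k+1) ∈ Set.Ioc (0:ℝ) 1 := by
      constructor
      · positivity
      · exact pow_le_one₀ (by norm_num) (by norm_num)
    have h2 := h _ h1
    rw [pow_rpow_comm' (by norm_num : (0:ℝ) ≤ (2:ℝ)⁻¹) d (k+1)] at h2
    calc m ≤ ENNReal.ofReal (c * ((2:ℝ)⁻¹ ^ d) ^ (k+1)) := h2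
    _ = ENNReal.ofReal ((c * (2:ℝ)⁻¹ ^ d) * ((2:ℝ)⁻¹ ^ d) ^ k) := by ring_nf
  have := ge_of_tendsto' (tendsto_geom' (c * (2:ℝ)⁻¹ ^ d) hq0 hq1) key
  exact le_antisymm this zero_le

private lemma setLintegral_rpow_Ioc' {d : ℝ} (hd : 0 < d) {A B : ℝ} (hA : 0 < A) (hAB : A ≤ B) :
    ∫⁻ r in Set.Ioc A B, ENNReal.ofReal (r ^ (d-1)) = ENNReal.ofReal ((B^d - A^d)/d) := by
  have hcont : ContinuousOn (fun r : ℝ => r ^ (d-1)) (Set.Icc A B) :=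
    ContinuousOn.rpow_const continuousOn_id
      (fun x hx => Or.inl (ne_of_gt (lt_of_lt_of_le hA hx.1)))
  have hint : IntegrableOn (fun r : ℝ => r ^ (d-1)) (Set.Ioc A B) volume :=
    (hcont.integrableOn_Icc).mono_set Set.Ioc_subset_Icc_self
  have hnn : 0 ≤ᵐ[volume.restrict (Set.Ioc A B)] fun r : ℝ => r ^ (d-1) := by
    rw [EventuallyLE, ae_restrict_iff' measurableSet_Ioc]
    exact ae_of_all _ (fun x hx => Real.rpow_nonneg (le_of_lt (lt_trans hA hx.1)) _)
  rw [← ofReal_integral_eq_lintegral_ofReal hint hnn]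
  congr 1
  rw [← intervalIntegral.integral_of_le hAB,
    integral_rpow (Or.inl (by linarith : (-1:ℝ) < d - 1))]
  norm_num

private lemma key_interval' {d : ℝ} (hd : 0 < d) {A B : ℝ} (hA : 0 < A) (hAB : A ≤ B) {f : ℝ → ℝ}
    (hf : AntitoneOn f (Set.Ioi 0)) (hfp : ∀ r ∈ Set.Ioi (0:ℝ), 0 < f r) :
    ENNReal.ofReal (f B) * ENNReal.ofReal ((B^d - A^d)/d)
        ≤ ∫⁻ r in Set.Ioc A B, ENNReal.ofReal (r ^ (d-1) * f r) ∧
      ∫⁻ r in Set.Ioc A B, ENNReal.ofReal (r ^ (d-1) * f r)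
        ≤ ENNReal.ofReal (f A) * ENNReal.ofReal ((B^d - A^d)/d) := by
  have hmul : ∀ c : ℝ, ∫⁻ r in Set.Ioc A B, ENNReal.ofReal c * ENNReal.ofReal (r ^ (d-1))
      = ENNReal.ofReal c * ENNReal.ofReal ((B^d - A^d)/d) := by
    intro c
    rw [lintegral_const_mul' _ _ ENNReal.ofReal_ne_top, setLintegral_rpow_Ioc' hd hA hAB]
  constructor
  · rw [← hmul (f B)]
    refine lintegral_mono_ae ?_
    rw [ae_restrict_iff' measurableSet_Ioc]
    refine ae_of_all _ (fun x hx => ?_)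
    rw [← ENNReal.ofReal_mul (le_of_lt (hfp B (lt_of_lt_of_le hA hAB)))]
    apply ENNReal.ofReal_le_ofReal
    rw [mul_comm]
    exact mul_le_mul_of_nonneg_left (hf (lt_trans hA hx.1) (lt_of_lt_of_le hA hAB) hx.2)
      (Real.rpow_nonneg (le_of_lt (lt_trans hA hx.1)) _)
  · rw [← hmul (f A)]
    refine lintegral_mono_ae ?_
    rw [ae_restrict_iff' measurableSet_Ioc]
    refine ae_of_all _ (fun x hx => ?_)
    rw [← ENNReal.ofReal_mul (le_of_lt (hfp A hA))]
    apply ENNReal.ofReal_le_ofReal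
    rw [mul_comm]
    exact mul_le_mul_of_nonneg_right (hf hA (lt_trans hA hx.1) (le_of_lt hx.1))
      (Real.rpow_nonneg (le_of_lt (lt_trans hA hx.1)) _)

end Helpers

/-- `K` is a `d`-set in `ℝⁿ` with associated mass distribution `μ`. -/
def IsDSet {n : ℕ} (d : ℝ) (μ : Measure (EuclideanSpace ℝ (Fin n)))
    (K : Set (EuclideanSpace ℝ (Fin n))) : Prop :=
  IsCompact K ∧ μ Kᶜ = 0 ∧
    (∀ F : Set (EuclideanSpace ℝ (Fin n)), IsClosed F → μ Fᶜ = 0 → K ⊆ F) ∧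
    0 < μ Set.univ ∧ μ Set.univ < ⊤ ∧
    ∃ c₁ c₂ : ℝ, 0 < c₁ ∧ 0 < c₂ ∧ ∀ r : ℝ, r ∈ Set.Ioc (0 : ℝ) 1 → ∀ x ∈ K,
      ENNReal.ofReal (c₁ * r ^ d) ≤ μ (Metric.closedBall x r) ∧
        μ (Metric.closedBall x r) ≤ ENNReal.ofReal (c₂ * r ^ d)

/-- The graph `Γ(f) = {(x, f(x)) : x ∈ K} ⊆ ℝ^{n+1}` of a function `f` on `K ⊆ ℝⁿ`. -/
def graphOn {n : ℕ} (K : Set (EuclideanSpace ℝ (Fin n))) (f : EuclideanSpace ℝ (Fin n) → ℝ) :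
    Set (EuclideanSpace ℝ (Fin (n + 1))) :=
  (fun x => (EuclideanSpace.equiv (Fin (n + 1)) ℝ).symm
      (Fin.snoc (EuclideanSpace.equiv (Fin n) ℝ x) (f x))) '' K

/-- For a `d`-set `K` in `ℝⁿ` with mass distribution `μ`,
`∫_{ℝⁿ} f(|x-y|) dμ(x) ≈ ∫₀^{diam K} r^{d-1} f(r) dr`, with equivalence constants independent
of `y ∈ K` and of the non-increasing continuous function `f : ℝ⁺ → ℝ⁺`. -/
theorem lintegral_dist_dSet_equiv {n : ℕ} (d : ℝ) (hd0 : 0 < d) (hdn : d ≤ n)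
    (μ : Measure (EuclideanSpace ℝ (Fin n))) (K : Set (EuclideanSpace ℝ (Fin n)))
    (hK : IsDSet d μ K) :
    ∃ C₁ C₂ : ℝ, 0 < C₁ ∧ 0 < C₂ ∧ ∀ y ∈ K, ∀ f : ℝ → ℝ,
      (∀ r ∈ Set.Ioi (0 : ℝ), 0 < f r) → AntitoneOn f (Set.Ioi 0) →
      ContinuousOn f (Set.Ioi 0) →
      ENNReal.ofReal C₁ * ∫⁻ r in Set.Ioo 0 (Metric.diam K), ENNReal.ofReal (r ^ (d - 1) * f r)
          ≤ ∫⁻ x, ENNReal.ofReal (f (dist x y)) ∂μ ∧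
        ∫⁻ x, ENNReal.ofReal (f (dist x y)) ∂μ
          ≤ ENNReal.ofReal C₂ *
            ∫⁻ r in Set.Ioo 0 (Metric.diam K), ENNReal.ofReal (r ^ (d - 1) * f r) := by
  classical
  obtain ⟨hKc, hKnull, hKsupp, hμ0, hμtop, c₁, c₂, hc₁, hc₂, hball⟩ := hK
  set D := Metric.diam K with hDdef
  -- K is nonempty
  have hKne : K.Nonempty := by
    by_contra h
    rw [Set.not_nonempty_iff_eq_empty] at h
    rw [h, Set.compl_empty] at hKnull
    rw [hKnull] at hμ0
    exact lt_irrefl _ hμ0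
  obtain ⟨y₀, hy₀⟩ := hKne
  have hKb : Bornology.IsBounded K := hKc.isBounded
  -- closed balls containing K have full measure
  have hfull : ∀ z r, K ⊆ Metric.closedBall z r → μ Set.univ ≤ μ (Metric.closedBall z r) := by
    intro z r hsub
    have h1 : μ (Metric.closedBall z r)ᶜ = 0 :=
      le_antisymm (le_trans (measure_mono (Set.compl_subset_compl.2 hsub)) hKnull.le) zero_le
    calc μ Set.univ = μ (Metric.closedBall z r ∪ (Metric.closedBall z r)ᶜ) := by
          rw [Set.union_compl_self]
    _ ≤ μ (Metric.closedBall z r) + μ (Metric.closedBall z r)ᶜ := measure_union_le _ _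
    _ = μ (Metric.closedBall z r) := by rw [h1, add_zero]
  -- diam K > 0
  have hD : 0 < D := by
    rcases lt_or_eq_of_le (Metric.diam_nonneg (s := K)) with h | h
    · exact h
    · exfalso
      have : μ Set.univ = 0 := by
        refine eq_zero_of_le_ofReal_rpow' (c := c₂) hd0 (fun s hs => ?_)
        have hsub : K ⊆ Metric.closedBall y₀ s := by
          intro x hx
          rw [Metric.mem_closedBall]
          calc dist x y₀ ≤ D := Metric.dist_le_diam_of_mem hKb hx hy₀
          _ ≤ s := by rw [hDdef, ← h]; exact hs.1.le
        exact le_trans (hfull y₀ s hsub) (hball s hs y₀ hy₀).2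
      rw [this] at hμ0
      exact lt_irrefl _ hμ0
  -- uniform two-sided bounds on ball measures for radii in (0, D]
  set M := (μ Set.univ).toReal with hMdef
  have hM0 : 0 < M := ENNReal.toReal_pos (ne_of_gt hμ0) (ne_of_lt hμtop)
  have hμuniv : μ Set.univ = ENNReal.ofReal M := by
    rw [hMdef, ENNReal.ofReal_toReal (ne_of_lt hμtop)]
  obtain ⟨a, b, ha, hb, hab⟩ : ∃ a b : ℝ, 0 < a ∧ 0 < b ∧ ∀ y ∈ K, ∀ r : ℝ, 0 < r → r ≤ D →
      ENNReal.ofReal (a * r ^ d) ≤ μ (Metric.closedBall y r) ∧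
      μ (Metric.closedBall y r) ≤ ENNReal.ofReal (b * r ^ d) := by
    have hDd : (0:ℝ) < D ^ d := Real.rpow_pos_of_pos hD d
    refine ⟨c₁ * min 1 (D ^ d)⁻¹, max c₂ M, by positivity,
      lt_of_lt_of_le hc₂ (le_max_left _ _), ?_⟩
    intro y hy r hr hrD
    have hrd0 : (0:ℝ) ≤ r ^ d := Real.rpow_nonneg hr.le d
    rcases le_or_gt r 1 with h1 | h1
    · obtain ⟨hl, hu⟩ := hball r ⟨hr, h1⟩ y hy
      constructor
      · refine le_trans (ENNReal.ofReal_le_ofReal ?_) hl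
        have hm : min 1 (D^d)⁻¹ ≤ 1 := min_le_left _ _
        have hm0 : (0:ℝ) ≤ min 1 (D^d)⁻¹ := le_min (by norm_num) (by positivity)
        calc c₁ * min 1 (D^d)⁻¹ * r^d = (c₁ * r^d) * min 1 (D^d)⁻¹ := by ring
        _ ≤ (c₁ * r^d) * 1 := mul_le_mul_of_nonneg_left hm (by positivity)
        _ = c₁ * r^d := mul_one _
      · refine le_trans hu (ENNReal.ofReal_le_ofReal ?_)
        nlinarith [le_max_left c₂ M]
    · constructor
      · obtain ⟨hl, _⟩ := hball 1 ⟨one_pos, le_refl 1⟩ y hy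
        have h2 : μ (Metric.closedBall y 1) ≤ μ (Metric.closedBall y r) :=
          measure_mono (Metric.closedBall_subset_closedBall h1.le)
        refine le_trans (ENNReal.ofReal_le_ofReal ?_) (le_trans hl h2)
        rw [Real.one_rpow]
        have hrDd : r ^ d ≤ D ^ d := Real.rpow_le_rpow hr.le hrD hd0.le
        have hm : min 1 (D^d)⁻¹ ≤ (D^d)⁻¹ := min_le_right _ _
        have hm0 : (0:ℝ) ≤ min 1 (D^d)⁻¹ := le_min (by norm_num) (by positivity)
        calc c₁ * min 1 (D^d)⁻¹ * r^d ≤ c₁ * (D^d)⁻¹ * (D^d) := by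
              have h4 : c₁ * min 1 (D^d)⁻¹ ≤ c₁ * (D^d)⁻¹ := mul_le_mul_of_nonneg_left hm hc₁.le
              exact mul_le_mul h4 hrDd hrd0 (by positivity)
        _ = c₁ := by field_simp
        _ = c₁ * 1 := (mul_one c₁).symm
      · have h2 : μ (Metric.closedBall y r) ≤ μ Set.univ := measure_mono (Set.subset_univ _)
        refine le_trans h2 ?_
        rw [hμuniv]
        apply ENNReal.ofReal_le_ofReal
        have h3 : (1:ℝ) ≤ r ^ d := Real.one_le_rpow h1.le hd0.le
        nlinarith [le_max_right c₂ M]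
  -- the contraction ratio
  set ρ : ℝ := min (1/2) ((a / (2*b)) ^ d⁻¹) with hρdef
  have hρ0 : 0 < ρ := lt_min (by norm_num) (Real.rpow_pos_of_pos (by positivity) _)
  have hρ1 : ρ < 1 := lt_of_le_of_lt (min_le_left _ _) (by norm_num)
  set P : ℝ := ρ ^ d with hPdef
  have hP0 : 0 < P := Real.rpow_pos_of_pos hρ0 d
  have hP1 : P < 1 := Real.rpow_lt_one hρ0.le hρ1 hd0
  have h1P : 0 < 1 - P := by linarith
  have hPa : b * P ≤ a / 2 := by
    have h1 : P ≤ a / (2*b) := by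
      rw [hPdef]
      calc ρ ^ d ≤ ((a/(2*b)) ^ d⁻¹) ^ d :=
            Real.rpow_le_rpow hρ0.le (min_le_right _ _) hd0.le
      _ = a / (2*b) := Real.rpow_inv_rpow (by positivity) (ne_of_gt hd0)
    calc b * P ≤ b * (a / (2*b)) := mul_le_mul_of_nonneg_left h1 hb.le
    _ = a / 2 := by field_simp
  refine ⟨a * d * P / 2, b * P⁻¹ * d / (1 - P), by positivity, by positivity, ?_⟩
  intro y hy f hfp hfa _hfc
  -- the geometric radii
  set R : ℕ → ℝ := fun k => D * ρ ^ k with hRdef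
  have hR0 : ∀ k, 0 < R k := fun k => mul_pos hD (pow_pos hρ0 k)
  have hRD : ∀ k, R k ≤ D := by
    intro k
    have : ρ ^ k ≤ 1 := pow_le_one₀ hρ0.le hρ1.le
    calc D * ρ^k ≤ D * 1 := by nlinarith
    _ = D := mul_one D
  have hRsucc : ∀ k, R (k+1) = ρ * R k := by
    intro k; rw [hRdef]; simp only; ring
  have hRanti : StrictAnti R := by
    intro i j hij
    exact mul_lt_mul_of_pos_left (pow_lt_pow_right_of_lt_one₀ hρ0 hρ1 hij) hD
  have hRd : ∀ k, (R (k+1)) ^ d = P * (R k) ^ d := by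
    intro k
    rw [hRsucc k, Real.mul_rpow hρ0.le (hR0 k).le]
  have hRd' : ∀ k, (R k) ^ d = P⁻¹ * (R (k+1)) ^ d := by
    intro k
    rw [hRd k, ← mul_assoc, inv_mul_cancel₀ (ne_of_gt hP0), one_mul]
  have hRdpos : ∀ k, (0:ℝ) < (R k) ^ d := fun k => Real.rpow_pos_of_pos (hR0 k) d
  have hcover : ∀ t : ℝ, 0 < t → t ≤ D → ∃ k, R (k+1) < t ∧ t ≤ R k := by
    intro t ht htD
    have hex : ∃ N, R N < t := by
      have h : Filter.Tendsto (fun k : ℕ => D * ρ ^ k) Filter.atTop (nhds (D * 0)) :=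
        (tendsto_pow_atTop_nhds_zero_of_lt_one hρ0.le hρ1).const_mul D
      rw [mul_zero] at h
      exact (h.eventually_lt_const ht).exists
    have hN : R (Nat.find hex) < t := Nat.find_spec hex
    have hN0 : Nat.find hex ≠ 0 := by
      intro h0
      rw [h0] at hN
      have : R 0 = D := by rw [hRdef]; simp
      rw [this] at hN
      linarith
    obtain ⟨m, hm⟩ := Nat.exists_eq_succ_of_ne_zero hN0
    refine ⟨m, ?_, ?_⟩
    · rw [← Nat.succ_eq_add_one, ← hm]; exact hN
    · by_contra hcon
      push_neg at hcon
      exact Nat.find_min hex (by omega) hcon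
  -- the annuli
  set A : ℕ → Set (EuclideanSpace ℝ (Fin n)) :=
    fun k => Metric.closedBall y (R k) \ Metric.closedBall y (R (k+1)) with hAdef
  have hAmeas : ∀ k, MeasurableSet (A k) :=
    fun k => measurableSet_closedBall.diff measurableSet_closedBall
  have hAmem : ∀ k x, x ∈ A k ↔ (R (k+1) < dist x y ∧ dist x y ≤ R k) := by
    intro k x
    simp only [hAdef, Set.mem_diff, Metric.mem_closedBall, not_le]
    tauto
  have hAkey : ∀ i j x, i < j → x ∈ A i → x ∈ A j → False := by
    intro i j x hij hxi hxj
    have h1 := (hAmem i x).1 hxi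
    have h2 := (hAmem j x).1 hxj
    have : R j ≤ R (i+1) := hRanti.antitone (by omega)
    linarith [h1.1, h2.2]
  -- measure bounds on annuli
  have hμA_up : ∀ k, μ (A k) ≤ ENNReal.ofReal (b * (R k)^d) :=
    fun k => le_trans (measure_mono Set.diff_subset) (hab y hy (R k) (hR0 k) (hRD k)).2
  have hμA_low : ∀ k, ENNReal.ofReal (a/2 * (R k)^d) ≤ μ (A k) := by
    intro k
    have h1 := (hab y hy (R k) (hR0 k) (hRD k)).1
    have h2 := (hab y hy (R (k+1)) (hR0 (k+1)) (hRD (k+1))).2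
    have hsub : Metric.closedBall y (R k) ⊆ A k ∪ Metric.closedBall y (R (k+1)) := by
      intro x hx
      by_cases hx2 : x ∈ Metric.closedBall y (R (k+1))
      · exact Or.inr hx2
      · exact Or.inl ⟨hx, hx2⟩
    have h3 : μ (Metric.closedBall y (R k)) ≤ μ (A k) + μ (Metric.closedBall y (R (k+1))) :=
      le_trans (measure_mono hsub) (measure_union_le _ _)
    have h4 : ENNReal.ofReal (a/2 * (R k)^d) + ENNReal.ofReal (a/2 * (R k)^d)
        ≤ μ (A k) + ENNReal.ofReal (a/2 * (R k)^d) := by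
      rw [← ENNReal.ofReal_add (by positivity) (by positivity)]
      have heq : a/2 * (R k)^d + a/2 * (R k)^d = a * (R k)^d := by ring
      rw [heq]
      refine le_trans h1 (le_trans h3 (add_le_add_right ?_ _))
      refine le_trans h2 (ENNReal.ofReal_le_ofReal ?_)
      rw [hRd k]
      nlinarith [hRdpos k]
    exact (ENNReal.add_le_add_iff_right ENNReal.ofReal_ne_top).1 h4
  -- key sums
  set g : ℕ → ℝ≥0∞ := fun k => ENNReal.ofReal (f (R (k+1)) * (R (k+1))^d) with hgdef
  have hfpos : ∀ k, 0 < f (R k) := fun k => hfp _ (hR0 k)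
  set I : ℝ≥0∞ := ∫⁻ x, ENNReal.ofReal (f (dist x y)) ∂μ with hIdef
  set J : ℝ≥0∞ := ∫⁻ t in Set.Ioo (0:ℝ) D, ENNReal.ofReal (t ^ (d-1) * f t) with hJdef
  set T : ℝ≥0∞ := ∑' k, g k with hTdef
  -- I ≤ ofReal (b * P⁻¹) * T
  have hI_up : I ≤ ENNReal.ofReal (b * P⁻¹) * T := by
    have hy0 : μ {y} = 0 := by
      refine eq_zero_of_le_ofReal_rpow' (c := c₂) hd0 (fun s hs => ?_)
      refine le_trans (measure_mono ?_) (hball s hs y hy).2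
      intro x hx
      rw [Set.mem_singleton_iff] at hx
      rw [hx, Metric.mem_closedBall, dist_self]
      exact hs.1.le
    have hKae : ∀ᵐ x ∂μ, x ∈ K := by
      rw [MeasureTheory.ae_iff]
      exact le_antisymm (le_trans (measure_mono (fun x hx => hx)) hKnull.le) zero_le
    have hyae : ∀ᵐ x ∂μ, x ≠ y := by
      rw [MeasureTheory.ae_iff]
      refine le_antisymm (le_trans (measure_mono ?_) hy0.le) zero_le
      intro x hx
      simp only [Set.mem_setOf_eq, not_not] at hx
      exact hx
    have hae : ∀ᵐ x ∂μ, ENNReal.ofReal (f (dist x y))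
        ≤ ∑' k, (A k).indicator (fun _ => ENNReal.ofReal (f (R (k+1)))) x := by
      filter_upwards [hKae, hyae] with x hxK hxy
      have hd1 : 0 < dist x y := dist_pos.2 hxy
      have hd2 : dist x y ≤ D := Metric.dist_le_diam_of_mem hKb hxK hy
      obtain ⟨k, hk1, hk2⟩ := hcover _ hd1 hd2
      have hxA : x ∈ A k := (hAmem k x).2 ⟨hk1, hk2⟩
      calc ENNReal.ofReal (f (dist x y)) ≤ ENNReal.ofReal (f (R (k+1))) :=
        ENNReal.ofReal_le_ofReal (hfa (hR0 (k+1)) hd1 hk1.le)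
      _ = (A k).indicator (fun _ => ENNReal.ofReal (f (R (k+1)))) x := by
        rw [Set.indicator_of_mem hxA]
      _ ≤ ∑' k, (A k).indicator (fun _ => ENNReal.ofReal (f (R (k+1)))) x := ENNReal.le_tsum k
    calc I ≤ ∫⁻ x, ∑' k, (A k).indicator (fun _ => ENNReal.ofReal (f (R (k+1)))) x ∂μ :=
      lintegral_mono_ae hae
    _ = ∑' k, ENNReal.ofReal (f (R (k+1))) * μ (A k) := by
        rw [lintegral_tsum (fun k => (measurable_const.indicator (hAmeas k)).aemeasurable)]
        congr 1
        funext k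
        rw [lintegral_indicator_const (hAmeas k)]
    _ ≤ ∑' k, ENNReal.ofReal (b * P⁻¹) * g k := by
        refine ENNReal.tsum_le_tsum (fun k => ?_)
        refine le_trans (mul_le_mul_right (hμA_up k) _) ?_
        rw [hgdef]
        rw [← ENNReal.ofReal_mul (hfpos (k+1)).le, ← ENNReal.ofReal_mul (by positivity)]
        apply ENNReal.ofReal_le_ofReal
        apply le_of_eq
        rw [hRd' k]
        ring
    _ = ENNReal.ofReal (b * P⁻¹) * T := ENNReal.tsum_mul_left
  -- ofReal (a/2) * T ≤ I
  have hI_low : ENNReal.ofReal (a/2) * T ≤ I := by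
    have hpt : ∀ x, (∑' k, (A (k+1)).indicator (fun _ => ENNReal.ofReal (f (R (k+1)))) x)
        ≤ ENNReal.ofReal (f (dist x y)) := by
      intro x
      by_cases hx : ∃ k, x ∈ A (k+1)
      · obtain ⟨k, hk⟩ := hx
        rw [tsum_eq_single k ?_]
        · rw [Set.indicator_of_mem hk]
          apply ENNReal.ofReal_le_ofReal
          have h1 := (hAmem (k+1) x).1 hk
          have hdx : 0 < dist x y := lt_trans (hR0 (k+2)) h1.1
          exact hfa hdx (hR0 (k+1)) h1.2
        · intro j hjk
          apply Set.indicator_of_notMem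
          intro hxj
          rcases lt_or_gt_of_ne hjk with h | h
          · exact hAkey (j+1) (k+1) x (by omega) hxj hk
          · exact hAkey (k+1) (j+1) x (by omega) hk hxj
      · push_neg at hx
        have : ∀ k : ℕ, (A (k+1)).indicator (fun _ => ENNReal.ofReal (f (R (k+1)))) x = 0 :=
          fun k => Set.indicator_of_notMem (hx k) _
        simp only [this, tsum_zero]
        exact zero_le
    calc ENNReal.ofReal (a/2) * T = ∑' k, ENNReal.ofReal (a/2) * g k :=
      ENNReal.tsum_mul_left.symm
    _ ≤ ∑' k, ENNReal.ofReal (f (R (k+1))) * μ (A (k+1)) := by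
        refine ENNReal.tsum_le_tsum (fun k => ?_)
        refine le_trans ?_ (mul_le_mul_right (hμA_low (k+1)) _)
        rw [hgdef]
        rw [← ENNReal.ofReal_mul (by positivity), ← ENNReal.ofReal_mul (hfpos (k+1)).le]
        apply ENNReal.ofReal_le_ofReal
        apply le_of_eq
        ring
    _ = ∫⁻ x, ∑' k, (A (k+1)).indicator (fun _ => ENNReal.ofReal (f (R (k+1)))) x ∂μ := by
        rw [lintegral_tsum (fun k => (measurable_const.indicator (hAmeas (k+1))).aemeasurable)]
        congr 1
        funext k
        rw [lintegral_indicator_const (hAmeas (k+1))]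
    _ ≤ I := lintegral_mono hpt
  -- J ≤ ofReal (P⁻¹/d) * T
  have hJ_up : J ≤ ENNReal.ofReal (P⁻¹/d) * T := by
    have hsub : Set.Ioo (0:ℝ) D ⊆ ⋃ k, Set.Ioc (R (k+1)) (R k) := by
      intro t ht
      obtain ⟨k, h1, h2⟩ := hcover t ht.1 ht.2.le
      exact Set.mem_iUnion.2 ⟨k, h1, h2⟩
    calc J ≤ ∫⁻ t in ⋃ k, Set.Ioc (R (k+1)) (R k), ENNReal.ofReal (t ^ (d-1) * f t) :=
      lintegral_mono_set hsub
    _ ≤ ∑' k, ∫⁻ t in Set.Ioc (R (k+1)) (R k), ENNReal.ofReal (t ^ (d-1) * f t) :=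
      lintegral_iUnion_le _ _
    _ ≤ ∑' k, ENNReal.ofReal (P⁻¹/d) * g k := by
        refine ENNReal.tsum_le_tsum (fun k => ?_)
        refine le_trans (key_interval' hd0 (hR0 (k+1)) (hRanti.antitone (by omega)) hfa hfp).2 ?_
        rw [hgdef]
        rw [← ENNReal.ofReal_mul (hfpos (k+1)).le, ← ENNReal.ofReal_mul (by positivity)]
        apply ENNReal.ofReal_le_ofReal
        have hX : (R k)^d - (R (k+1))^d ≤ P⁻¹ * (R (k+1))^d := by
          rw [← hRd' k]
          nlinarith [hRdpos (k+1)]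
        calc f (R (k+1)) * (((R k)^d - (R (k+1))^d)/d)
            ≤ f (R (k+1)) * ((P⁻¹ * (R (k+1))^d)/d) := by
              refine mul_le_mul_of_nonneg_left ?_ (hfpos (k+1)).le
              exact (div_le_div_iff_of_pos_right hd0).mpr hX
        _ = P⁻¹/d * (f (R (k+1)) * (R (k+1))^d) := by ring
    _ = ENNReal.ofReal (P⁻¹/d) * T := ENNReal.tsum_mul_left
  -- ofReal ((1-P)/d) * T ≤ J
  have hJ_low : ENNReal.ofReal ((1-P)/d) * T ≤ J := by
    have hR00 : R 0 = D := by rw [hRdef]; simp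
    have hsub2 : (⋃ k, Set.Ioc (R (k+2)) (R (k+1))) ⊆ Set.Ioo (0:ℝ) D := by
      intro t ht
      obtain ⟨k, h⟩ := Set.mem_iUnion.1 ht
      refine ⟨lt_trans (hR0 (k+2)) h.1, lt_of_le_of_lt h.2 ?_⟩
      rw [← hR00]
      exact hRanti (by omega)
    have hdisj2 : Pairwise (Function.onFun Disjoint (fun k => Set.Ioc (R (k+2)) (R (k+1)))) := by
      intro i j hij
      rw [Function.onFun, Set.disjoint_left]
      intro x hx1 hx2
      rcases lt_or_gt_of_ne hij with h | h
      · have : R (j+1) ≤ R (i+2) := hRanti.antitone (by omega)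
        have := hx1.1
        have := hx2.2
        linarith
      · have : R (i+1) ≤ R (j+2) := hRanti.antitone (by omega)
        have := hx2.1
        have := hx1.2
        linarith
    calc ENNReal.ofReal ((1-P)/d) * T = ∑' k, ENNReal.ofReal ((1-P)/d) * g k :=
      ENNReal.tsum_mul_left.symm
    _ ≤ ∑' k, ∫⁻ t in Set.Ioc (R (k+2)) (R (k+1)), ENNReal.ofReal (t ^ (d-1) * f t) := by
        refine ENNReal.tsum_le_tsum (fun k => ?_)
        refine le_trans ?_
          (key_interval' hd0 (hR0 (k+2)) (hRanti.antitone (by omega)) hfa hfp).1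
        rw [hgdef]
        rw [← ENNReal.ofReal_mul (by positivity), ← ENNReal.ofReal_mul (hfpos (k+1)).le]
        apply ENNReal.ofReal_le_ofReal
        apply le_of_eq
        rw [hRd (k+1)]
        ring
    _ = ∫⁻ t in ⋃ k, Set.Ioc (R (k+2)) (R (k+1)), ENNReal.ofReal (t ^ (d-1) * f t) :=
      (lintegral_iUnion (fun k => measurableSet_Ioc) hdisj2 _).symm
    _ ≤ J := lintegral_mono_set hsub2
  -- conclude
  constructor
  · calc ENNReal.ofReal (a*d*P/2) * J
        ≤ ENNReal.ofReal (a*d*P/2) * (ENNReal.ofReal (P⁻¹/d) * T) := mul_le_mul_right hJ_up _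
    _ = ENNReal.ofReal (a/2) * T := by
        rw [← mul_assoc, ← ENNReal.ofReal_mul (by positivity)]
        congr 2
        field_simp
    _ ≤ I := hI_low
  · calc I ≤ ENNReal.ofReal (b * P⁻¹) * T := hI_up
    _ = ENNReal.ofReal (b*P⁻¹*d/(1-P)) * (ENNReal.ofReal ((1-P)/d) * T) := by
        rw [← mul_assoc, ← ENNReal.ofReal_mul (by positivity)]
        congr 2
        field_simp
    _ ≤ ENNReal.ofReal (b*P⁻¹*d/(1-P)) * J := mul_le_mul_right hJ_low _

end
end

section
/- Let 0 < d ≤ n and let K be a d-set in ℝⁿ with associated mass distribution μ_K. Then ∫_K |x − y|^{−u} dμ_K(x) ≈ ∫₀^{diam K} r^{d−u−1} dr, with equivalence constants independent of y ∈ K and of u ≥ 0. -/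
open MeasureTheory Metric Set

noncomputable section

private lemma lint_not_int {s : Set ℝ} {f : ℝ → ℝ} (hm : Measurable f)
    (hnn : 0 ≤ᵐ[volume.restrict s] f) (h : ¬ MeasureTheory.IntegrableOn f s) :
    ∫⁻ x in s, ENNReal.ofReal (f x) = ⊤ := by
  by_contra hne
  exact h ⟨hm.aestronglyMeasurable,
    (hasFiniteIntegral_iff_ofReal hnn).2 (lt_top_iff_ne_top.2 hne)⟩

open intervalIntegral in
private lemma lint_Ioo_rpow {D a : ℝ} (hD : 0 < D) (ha : -1 < a) :
    ∫⁻ r in Ioo 0 D, ENNReal.ofReal (r ^ a) = ENNReal.ofReal (D ^ (a + 1) / (a + 1)) := by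
  rw [← ofReal_integral_eq_lintegral_ofReal ((intervalIntegral.integrableOn_Ioo_rpow_iff hD).2 ha) ?_]
  · congr 1
    rw [← integral_Ioc_eq_integral_Ioo, ← intervalIntegral.integral_of_le hD.le,
      integral_rpow (Or.inl ha), Real.zero_rpow (by linarith), sub_zero]
  · filter_upwards [ae_restrict_mem measurableSet_Ioo] with x hx
    exact Real.rpow_nonneg hx.1.le _

private lemma lint_Ioo_rpow_top {D a : ℝ} (hD : 0 < D) (ha : a ≤ -1) :
    ∫⁻ r in Ioo 0 D, ENNReal.ofReal (r ^ a) = ⊤ := by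
  refine lint_not_int (measurable_id.pow measurable_const) ?_
    (fun h => absurd ((intervalIntegral.integrableOn_Ioo_rpow_iff hD).1 h) (not_lt.2 ha))
  filter_upwards [ae_restrict_mem measurableSet_Ioo] with x hx
  exact Real.rpow_nonneg hx.1.le _

private lemma lint_Ioi_rpow {c a : ℝ} (hc : 0 < c) (ha : a < -1) :
    ∫⁻ t in Ioi c, ENNReal.ofReal (t ^ a) = ENNReal.ofReal (c ^ (a + 1) / (-(a + 1))) := by
  rw [← ofReal_integral_eq_lintegral_ofReal (integrableOn_Ioi_rpow_of_lt ha hc) ?_]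
  · rw [integral_Ioi_rpow_of_lt ha hc, div_neg, neg_div]
  · filter_upwards [ae_restrict_mem measurableSet_Ioi] with x hx
    exact Real.rpow_nonneg (hc.trans hx).le _

private lemma lint_Ioi_rpow_top {c a : ℝ} (hc : 0 < c) (ha : -1 ≤ a) :
    ∫⁻ t in Ioi c, ENNReal.ofReal (t ^ a) = ⊤ := by
  refine lint_not_int (measurable_id.pow measurable_const) ?_
    (fun h => absurd ((integrableOn_Ioi_rpow_iff hc).1 h) (not_lt.2 ha))
  filter_upwards [ae_restrict_mem measurableSet_Ioi] with x hx
  exact Real.rpow_nonneg (hc.trans hx).le _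


set_option maxHeartbeats 1000000 in
/-- For a `d`-set `K` in `ℝⁿ` with mass distribution `μ`,
`∫_K |x-y|^{-u} dμ(x) ≈ ∫₀^{diam K} r^{d-u-1} dr`, with equivalence constants independent of
`y ∈ K` and of `u ≥ 0`. -/
theorem lintegral_rpow_neg_dist_dSet_equiv {n : ℕ} (d : ℝ) (hd0 : 0 < d) (hdn : d ≤ n)
    (μ : Measure (EuclideanSpace ℝ (Fin n))) (K : Set (EuclideanSpace ℝ (Fin n)))
    (hK : IsDSet d μ K) :
    ∃ C₁ C₂ : ℝ, 0 < C₁ ∧ 0 < C₂ ∧ ∀ y ∈ K, ∀ u : ℝ, 0 ≤ u →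
      ENNReal.ofReal C₁ * ∫⁻ r in Set.Ioo 0 (Metric.diam K), ENNReal.ofReal (r ^ (d - u - 1))
          ≤ ∫⁻ x in K, ENNReal.ofReal (dist x y) ^ (-u) ∂μ ∧
        ∫⁻ x in K, ENNReal.ofReal (dist x y) ^ (-u) ∂μ
          ≤ ENNReal.ofReal C₂ *
            ∫⁻ r in Set.Ioo 0 (Metric.diam K), ENNReal.ofReal (r ^ (d - u - 1)) := by
  obtain ⟨hKcomp, hKnull, -, hμpos, hμfin, c₁, c₂, hc₁, hc₂, hball⟩ := hK
  have hKm : MeasurableSet K := hKcomp.isClosed.measurableSet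
  set D := Metric.diam K with hDdef
  have hμK : μ K = μ Set.univ := by
    refine le_antisymm (measure_mono (subset_univ K)) ?_
    calc μ Set.univ = μ (K ∪ Kᶜ) := by rw [union_compl_self]
      _ ≤ μ K + μ Kᶜ := measure_union_le _ _
      _ = μ K := by rw [hKnull, add_zero]
  set M : ℝ := (μ Set.univ).toReal with hMdef
  have hM : 0 < M := ENNReal.toReal_pos hμpos.ne' hμfin.ne
  have hμuniv : μ Set.univ = ENNReal.ofReal M := (ENNReal.ofReal_toReal hμfin.ne).symm
  have hKne : K.Nonempty := by
    rw [nonempty_iff_ne_empty]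
    intro h
    rw [h, measure_empty] at hμK
    exact hμpos.ne' hμK.symm
  have hsmall : ∀ m : ℝ, 0 < m → ∃ r : ℝ, r ∈ Set.Ioc (0:ℝ) 1 ∧ c₂ * r ^ d < m := by
    intro m hm
    have hq : (0:ℝ) < m / (2 * c₂) := by positivity
    set ε := min 1 ((m / (2 * c₂)) ^ d⁻¹) with hε
    have hε0 : 0 < ε := lt_min one_pos (Real.rpow_pos_of_pos hq _)
    refine ⟨ε, ⟨hε0, min_le_left _ _⟩, ?_⟩
    have h1 : ε ^ d ≤ ((m / (2 * c₂)) ^ d⁻¹) ^ d :=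
      Real.rpow_le_rpow hε0.le (min_le_right _ _) hd0.le
    rw [← Real.rpow_mul hq.le, inv_mul_cancel₀ hd0.ne', Real.rpow_one] at h1
    have h2 := mul_le_mul_of_nonneg_left h1 hc₂.le
    have heq : c₂ * (m / (2 * c₂)) = m / 2 := by field_simp
    nlinarith
  have hD0 : 0 < D := by
    rcases lt_or_eq_of_le (Metric.diam_nonneg : (0:ℝ) ≤ D) with h | h
    · exact h
    · exfalso
      obtain ⟨y, hy⟩ := hKne
      obtain ⟨r, hr, hrm⟩ := hsmall M hM
      have hsub : K ⊆ Metric.closedBall y r := fun x hx => by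
        have h2 := Metric.dist_le_diam_of_mem hKcomp.isBounded hx hy
        exact Metric.mem_closedBall.2 (by rw [← hDdef] at h2; linarith [hr.1])
      have h2 := (measure_mono hsub).trans (hball r hr y hy).2
      rw [hμK, hμuniv] at h2
      have := (ENNReal.ofReal_le_ofReal_iff
        (mul_nonneg hc₂.le (Real.rpow_nonneg hr.1.le d))).1 h2
      linarith
  have hpt : ∀ y ∈ K, μ {y} = 0 := by
    intro y hy
    by_contra h
    have hfin : μ {y} ≠ ⊤ := ((measure_mono (subset_univ _)).trans_lt hμfin).ne
    have hm : 0 < (μ {y}).toReal := ENNReal.toReal_pos h hfin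
    obtain ⟨r, hr, hrm⟩ := hsmall _ hm
    have hsub : {y} ⊆ Metric.closedBall y r := by
      intro x hx
      rw [mem_singleton_iff] at hx
      subst hx
      exact Metric.mem_closedBall_self hr.1.le
    have h2 := (measure_mono hsub).trans (hball r hr y hy).2
    rw [← ENNReal.ofReal_toReal hfin] at h2
    have := (ENNReal.ofReal_le_ofReal_iff
      (mul_nonneg hc₂.le (Real.rpow_nonneg hr.1.le d))).1 h2
    linarith
  have hDd : (0:ℝ) < D ^ d := Real.rpow_pos_of_pos hD0 _
  have hDnd : (0:ℝ) < D ^ (-d) := Real.rpow_pos_of_pos hD0 _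
  have hDinv : D ^ (-d) * D ^ d = 1 := by
    rw [← Real.rpow_add hD0]
    simp
  set A₁ : ℝ := c₁ * min 1 (D ^ (-d)) with hA₁def
  have hA₁pos : 0 < A₁ := mul_pos hc₁ (lt_min one_pos hDnd)
  set A₂ : ℝ := max c₂ M with hA₂def
  have hA₂pos : 0 < A₂ := lt_of_lt_of_le hc₂ (le_max_left _ _)
  have hA₁bd : ∀ y ∈ K, ∀ r : ℝ, 0 < r → r ≤ D →
      ENNReal.ofReal (A₁ * r ^ d) ≤ μ (Metric.closedBall y r) := by
    intro y hy r hr hrD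
    have hrd : (0:ℝ) < r ^ d := Real.rpow_pos_of_pos hr _
    rcases le_or_gt r 1 with h1 | h1
    · refine le_trans (ENNReal.ofReal_le_ofReal ?_) (hball r ⟨hr, h1⟩ y hy).1
      have h2 := min_le_left (1:ℝ) (D ^ (-d))
      rw [hA₁def]
      nlinarith [mul_le_mul_of_nonneg_left (mul_le_mul_of_nonneg_right h2 hrd.le) hc₁.le]
    · refine le_trans (ENNReal.ofReal_le_ofReal ?_)
        ((hball 1 ⟨one_pos, le_refl 1⟩ y hy).1.trans
          (measure_mono (Metric.closedBall_subset_closedBall h1.le)))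
      have hrdD : r ^ d ≤ D ^ d := Real.rpow_le_rpow hr.le hrD hd0.le
      have hmin : min 1 (D ^ (-d)) ≤ D ^ (-d) := min_le_right _ _
      have h0 : (0:ℝ) < min 1 (D ^ (-d)) := lt_min one_pos hDnd
      have h5 : min 1 (D ^ (-d)) * r ^ d ≤ D ^ (-d) * r ^ d :=
        mul_le_mul_of_nonneg_right hmin hrd.le
      have h6 : D ^ (-d) * r ^ d ≤ D ^ (-d) * D ^ d :=
        mul_le_mul_of_nonneg_left hrdD hDnd.le
      rw [hA₁def, Real.one_rpow]
      nlinarith [h5, h6, hDinv, hc₁.le]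
  have hA₂bd : ∀ y ∈ K, ∀ r : ℝ, 0 < r →
      μ (Metric.closedBall y r) ≤ ENNReal.ofReal (A₂ * r ^ d) := by
    intro y hy r hr
    have hrd : (0:ℝ) < r ^ d := Real.rpow_pos_of_pos hr _
    rcases le_or_gt r 1 with h1 | h1
    · refine (hball r ⟨hr, h1⟩ y hy).2.trans (ENNReal.ofReal_le_ofReal ?_)
      have := le_max_left c₂ M
      rw [hA₂def]
      nlinarith [mul_le_mul_of_nonneg_right (le_max_left c₂ M) hrd.le]
    · refine (measure_mono (subset_univ _)).trans ?_
      rw [hμuniv]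
      apply ENNReal.ofReal_le_ofReal
      have h1d : (1:ℝ) ≤ r ^ d := by
        calc (1:ℝ) = 1 ^ d := (Real.one_rpow d).symm
          _ ≤ r ^ d := Real.rpow_le_rpow zero_le_one h1.le hd0.le
      have hcM : M ≤ c₂ ⊔ M := le_max_right c₂ M
      have h7 : (c₂ ⊔ M) * 1 ≤ (c₂ ⊔ M) * r ^ d :=
        mul_le_mul_of_nonneg_left h1d (le_trans hM.le hcM)
      rw [hA₂def]
      nlinarith [h7, hcM]
  have hνball_eq : ∀ s : Set (EuclideanSpace ℝ (Fin n)), MeasurableSet s →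
      μ.restrict K s = μ s := by
    intro s hs
    rw [Measure.restrict_apply hs]
    refine le_antisymm (measure_mono inter_subset_left) ?_
    calc μ s = μ ((s ∩ K) ∪ (s ∩ Kᶜ)) := by rw [inter_union_compl]
      _ ≤ μ (s ∩ K) + μ (s ∩ Kᶜ) := measure_union_le _ _
      _ ≤ μ (s ∩ K) + μ Kᶜ := add_le_add le_rfl (measure_mono inter_subset_right)
      _ = μ (s ∩ K) := by rw [hKnull, add_zero]
  refine ⟨min A₁ (M * D ^ (-d)) * d / 2, A₂ * d,
    div_pos (mul_pos (lt_min hA₁pos (mul_pos hM hDnd)) hd0) two_pos,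
    mul_pos hA₂pos hd0, ?_⟩
  intro y hy u hu0
  have hKD : K ⊆ Metric.closedBall y D := fun x hx =>
    Metric.mem_closedBall.2 (Metric.dist_le_diam_of_mem hKcomp.isBounded hx hy)
  have hμKD : μ K ≤ ENNReal.ofReal (A₂ * D ^ d) :=
    (measure_mono hKD).trans (hA₂bd y hy D hD0)
  rcases eq_or_lt_of_le hu0 with hu | hu
  · -- u = 0
    subst hu
    have hI : ∫⁻ x in K, ENNReal.ofReal (dist x y) ^ (-(0:ℝ)) ∂μ = μ K := by
      simp [neg_zero, ENNReal.rpow_zero, setLIntegral_one]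
    have hR : ∫⁻ r in Ioo (0:ℝ) D, ENNReal.ofReal (r ^ (d - 0 - 1))
        = ENNReal.ofReal (D ^ d / d) := by
      rw [lint_Ioo_rpow hD0 (by linarith)]
      norm_num
    rw [hI, hR]
    constructor
    · rw [← ENNReal.ofReal_mul
        (le_of_lt (div_pos (mul_pos (lt_min hA₁pos (mul_pos hM hDnd)) hd0) two_pos)),
        hμK, hμuniv]
      apply ENNReal.ofReal_le_ofReal
      have h1 : min A₁ (M * D ^ (-d)) ≤ M * D ^ (-d) := min_le_right _ _
      have key : min A₁ (M * D ^ (-d)) * d / 2 * (D ^ d / d)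
          = min A₁ (M * D ^ (-d)) * D ^ d / 2 := by
        field_simp
      rw [key]
      nlinarith [mul_le_mul_of_nonneg_right h1 hDd.le, hDinv, hM.le]
    · rw [← ENNReal.ofReal_mul (mul_nonneg hA₂pos.le hd0.le)]
      refine hμKD.trans (ENNReal.ofReal_le_ofReal (le_of_eq ?_))
      field_simp
  · -- 0 < u
    have hfm : Measurable (fun x : EuclideanSpace ℝ (Fin n) => dist x y ^ (-u)) :=
      (measurable_id.dist measurable_const).pow measurable_const
    have hν_y : μ.restrict K {y} = 0 := by
      rw [Measure.restrict_apply (measurableSet_singleton y)]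
      exact measure_mono_null inter_subset_left (hpt y hy)
    have hae_ne : ∀ᵐ x ∂μ.restrict K, x ≠ y := by
      rw [ae_iff]
      convert hν_y using 2
      ext x
      simp
    have stepA : ∫⁻ x in K, ENNReal.ofReal (dist x y) ^ (-u) ∂μ
        = ∫⁻ x in K, ENNReal.ofReal (dist x y ^ (-u)) ∂μ := by
      apply lintegral_congr_ae
      filter_upwards [hae_ne] with x hx
      exact ENNReal.ofReal_rpow_of_pos (dist_pos.2 hx)
    have stepB : ∫⁻ x in K, ENNReal.ofReal (dist x y ^ (-u)) ∂μ
        = ∫⁻ t in Ioi (0:ℝ), μ.restrict K {a | t ≤ dist a y ^ (-u)} :=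
      lintegral_eq_lintegral_meas_le (μ.restrict K)
        (Filter.Eventually.of_forall fun x => Real.rpow_nonneg dist_nonneg _) hfm.aemeasurable
    have hiff : ∀ t : ℝ, 0 < t → ∀ s : ℝ, 0 < s → (t ≤ s ^ (-u) ↔ s ≤ t ^ (-u⁻¹)) := by
      intro t ht s hs
      constructor
      · intro h
        have h2 := Real.rpow_le_rpow_of_nonpos ht h (neg_nonpos.2 (inv_nonneg.2 hu.le))
        rwa [← Real.rpow_mul hs.le, neg_mul_neg, mul_inv_cancel₀ hu.ne', Real.rpow_one] at h2
      · intro h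
        have h2 := Real.rpow_le_rpow_of_nonpos hs h (neg_nonpos.2 hu.le)
        rwa [← Real.rpow_mul ht.le, neg_mul_neg, inv_mul_cancel₀ hu.ne', Real.rpow_one] at h2
    have stepC : ∀ t ∈ Ioi (0:ℝ), μ.restrict K {a | t ≤ dist a y ^ (-u)}
        = μ.restrict K (Metric.closedBall y (t ^ (-u⁻¹))) := by
      intro t ht
      rw [mem_Ioi] at ht
      have hAsub : {a : EuclideanSpace ℝ (Fin n) | t ≤ dist a y ^ (-u)}
          ⊆ Metric.closedBall y (t ^ (-u⁻¹)) := by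
        intro a ha
        rw [mem_setOf_eq] at ha
        rcases eq_or_lt_of_le (dist_nonneg : (0:ℝ) ≤ dist a y) with h0 | h0
        · rw [← h0, Real.zero_rpow (neg_ne_zero.2 hu.ne')] at ha
          linarith
        · exact Metric.mem_closedBall.2 ((hiff t ht _ h0).1 ha)
      have hBsub : Metric.closedBall y (t ^ (-u⁻¹))
          ⊆ {a : EuclideanSpace ℝ (Fin n) | t ≤ dist a y ^ (-u)} ∪ {y} := by
        intro a ha
        by_cases hay : a = y
        · exact Or.inr (by simp [hay])
        · exact Or.inl ((hiff t ht _ (dist_pos.2 hay)).2 (Metric.mem_closedBall.1 ha))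
      refine le_antisymm (measure_mono hAsub) ?_
      calc μ.restrict K (Metric.closedBall y (t ^ (-u⁻¹)))
          ≤ μ.restrict K ({a | t ≤ dist a y ^ (-u)} ∪ {y}) := measure_mono hBsub
        _ ≤ μ.restrict K {a | t ≤ dist a y ^ (-u)} + μ.restrict K {y} := measure_union_le _ _
        _ = μ.restrict K {a | t ≤ dist a y ^ (-u)} := by rw [hν_y, add_zero]
    have hIJ : ∫⁻ x in K, ENNReal.ofReal (dist x y) ^ (-u) ∂μ
        = ∫⁻ t in Ioi (0:ℝ), μ.restrict K (Metric.closedBall y (t ^ (-u⁻¹))) := by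
      rw [stepA, stepB]
      exact setLIntegral_congr_fun measurableSet_Ioi stepC
    set T : ℝ := D ^ (-u) with hTdef
    have hT0 : 0 < T := Real.rpow_pos_of_pos hD0 _
    have hsrad : ∀ t : ℝ, 0 < t → (0:ℝ) < t ^ (-u⁻¹) := fun t ht => Real.rpow_pos_of_pos ht _
    have hradD : ∀ t : ℝ, T < t → t ^ (-u⁻¹) ≤ D := by
      intro t htT
      have h2 := Real.rpow_le_rpow_of_nonpos hT0 htT.le (neg_nonpos.2 (inv_nonneg.2 hu.le))
      rwa [hTdef, ← Real.rpow_mul hD0.le, neg_mul_neg, mul_inv_cancel₀ hu.ne',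
        Real.rpow_one] at h2
    have hsd : ∀ t : ℝ, 0 < t → (t ^ (-u⁻¹)) ^ d = t ^ (-(d/u)) := by
      intro t ht
      rw [← Real.rpow_mul ht.le]
      congr 1
      field_simp
    have hlowJ : ∫⁻ t in Ioi T, ENNReal.ofReal (A₁ * t ^ (-(d/u)))
        ≤ ∫⁻ t in Ioi (0:ℝ), μ.restrict K (Metric.closedBall y (t ^ (-u⁻¹))) := by
      refine le_trans ?_ (lintegral_mono_set (Ioi_subset_Ioi hT0.le))
      refine setLIntegral_mono' measurableSet_Ioi ?_
      intro t ht
      rw [mem_Ioi] at ht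
      have ht0 : 0 < t := hT0.trans ht
      rw [← hsd t ht0, hνball_eq _ measurableSet_closedBall]
      exact hA₁bd y hy _ (hsrad t ht0) (hradD t ht)
    have hlow2 : ENNReal.ofReal (M * D ^ (-u))
        ≤ ∫⁻ x in K, ENNReal.ofReal (dist x y) ^ (-u) ∂μ := by
      rw [stepA]
      have h0 : ∫⁻ _x in K, ENNReal.ofReal (D ^ (-u)) ∂μ = ENNReal.ofReal (M * D ^ (-u)) := by
        rw [setLIntegral_const, hμK, hμuniv,
          ← ENNReal.ofReal_mul (Real.rpow_nonneg hD0.le _)]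
        congr 1
        ring
      rw [← h0]
      apply lintegral_mono_ae
      filter_upwards [hae_ne, ae_restrict_mem hKm] with x hx hxK
      exact ENNReal.ofReal_le_ofReal
        (Real.rpow_le_rpow_of_nonpos (dist_pos.2 hx)
          (Metric.mem_closedBall.1 (hKD hxK)) (neg_nonpos.2 hu.le))
    have hJsplit : ∫⁻ t in Ioi (0:ℝ), μ.restrict K (Metric.closedBall y (t ^ (-u⁻¹)))
        = (∫⁻ t in Ioc 0 T, μ.restrict K (Metric.closedBall y (t ^ (-u⁻¹))))
          + ∫⁻ t in Ioi T, μ.restrict K (Metric.closedBall y (t ^ (-u⁻¹))) := by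
      rw [← lintegral_union measurableSet_Ioi Set.Ioc_disjoint_Ioi_same,
        Set.Ioc_union_Ioi_eq_Ioi hT0.le]
    have hp1 : ∫⁻ t in Ioc (0:ℝ) T, μ.restrict K (Metric.closedBall y (t ^ (-u⁻¹)))
        ≤ ENNReal.ofReal (A₂ * D ^ d) * ENNReal.ofReal T := by
      calc ∫⁻ t in Ioc (0:ℝ) T, μ.restrict K (Metric.closedBall y (t ^ (-u⁻¹)))
          ≤ ∫⁻ _t in Ioc (0:ℝ) T, ENNReal.ofReal (A₂ * D ^ d) := by
            refine setLIntegral_mono' measurableSet_Ioc ?_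
            intro t _
            calc μ.restrict K (Metric.closedBall y (t ^ (-u⁻¹)))
                ≤ μ.restrict K Set.univ := measure_mono (subset_univ _)
              _ = μ K := Measure.restrict_apply_univ K
              _ ≤ ENNReal.ofReal (A₂ * D ^ d) := hμKD
        _ = ENNReal.ofReal (A₂ * D ^ d) * ENNReal.ofReal T := by
            rw [setLIntegral_const, Real.volume_Ioc, sub_zero]
    have hp2 : ∫⁻ t in Ioi T, μ.restrict K (Metric.closedBall y (t ^ (-u⁻¹)))
        ≤ ENNReal.ofReal A₂ * ∫⁻ t in Ioi T, ENNReal.ofReal (t ^ (-(d/u))) := by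
      calc ∫⁻ t in Ioi T, μ.restrict K (Metric.closedBall y (t ^ (-u⁻¹)))
          ≤ ∫⁻ t in Ioi T, ENNReal.ofReal (A₂ * t ^ (-(d/u))) := by
            refine setLIntegral_mono' measurableSet_Ioi ?_
            intro t ht
            rw [mem_Ioi] at ht
            have ht0 : 0 < t := hT0.trans ht
            rw [hνball_eq _ measurableSet_closedBall, ← hsd t ht0]
            exact hA₂bd y hy _ (hsrad t ht0)
        _ = ENNReal.ofReal A₂ * ∫⁻ t in Ioi T, ENNReal.ofReal (t ^ (-(d/u))) := by
            simp_rw [ENNReal.ofReal_mul hA₂pos.le]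
            rw [lintegral_const_mul' _ _ ENNReal.ofReal_ne_top]
    rcases lt_or_ge u d with hud | hud
    · -- 0 < u < d
      have hdu : 0 < d - u := by linarith
      have hR : ∫⁻ r in Ioo (0:ℝ) D, ENNReal.ofReal (r ^ (d - u - 1))
          = ENNReal.ofReal (D ^ (d - u) / (d - u)) := by
        rw [lint_Ioo_rpow hD0 (by linarith)]
        have e : d - u - 1 + 1 = d - u := by ring
        rw [e]
      have hdu1 : -(d/u) < -1 := by
        rw [neg_lt_neg_iff]
        exact (one_lt_div hu).2 hud
      have hIoi : ∫⁻ t in Ioi T, ENNReal.ofReal (t ^ (-(d/u)))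
          = ENNReal.ofReal (D ^ (d - u) * (u / (d - u))) := by
        rw [lint_Ioi_rpow hT0 hdu1]
        congr 1
        have h1 : T ^ (-(d/u) + 1) = D ^ (d - u) := by
          rw [hTdef, ← Real.rpow_mul hD0.le]
          congr 1
          field_simp
          ring
        have h2 : -(-(d/u) + 1) = (d - u)/u := by
          field_simp
          ring
        rw [h1, h2, div_div_eq_mul_div, mul_div_assoc]
      have hXpos : (0:ℝ) < D ^ (d - u) := Real.rpow_pos_of_pos hD0 _
      rw [hR]
      constructor
      · -- lower bound
        have hIoiA : ∫⁻ t in Ioi T, ENNReal.ofReal (A₁ * t ^ (-(d/u)))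
            = ENNReal.ofReal (A₁ * u) * ENNReal.ofReal (D ^ (d - u) / (d - u)) := by
          calc ∫⁻ t in Ioi T, ENNReal.ofReal (A₁ * t ^ (-(d/u)))
              = ∫⁻ t in Ioi T, ENNReal.ofReal A₁ * ENNReal.ofReal (t ^ (-(d/u))) := by
                refine lintegral_congr fun t => ?_
                rw [ENNReal.ofReal_mul hA₁pos.le]
            _ = ENNReal.ofReal A₁ * ENNReal.ofReal (D ^ (d - u) * (u / (d - u))) := by
                rw [lintegral_const_mul' _ _ ENNReal.ofReal_ne_top, hIoi]
            _ = ENNReal.ofReal (A₁ * u) * ENNReal.ofReal (D ^ (d - u) / (d - u)) := by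
                rw [← ENNReal.ofReal_mul hA₁pos.le,
                  ← ENNReal.ofReal_mul (mul_nonneg hA₁pos.le hu.le)]
                congr 1
                field_simp
        have hl1 : ENNReal.ofReal (A₁ * u) * ENNReal.ofReal (D ^ (d - u) / (d - u))
            ≤ ∫⁻ x in K, ENNReal.ofReal (dist x y) ^ (-u) ∂μ := by
          rw [hIJ, ← hIoiA]
          exact hlowJ
        have hl2 : ENNReal.ofReal (M * D ^ (-d) * (d - u))
              * ENNReal.ofReal (D ^ (d - u) / (d - u))
            ≤ ∫⁻ x in K, ENNReal.ofReal (dist x y) ^ (-u) ∂μ := by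
          refine le_trans (le_of_eq ?_) hlow2
          rw [← ENNReal.ofReal_mul
            (mul_nonneg (mul_nonneg hM.le hDnd.le) hdu.le)]
          congr 1
          have h3 : D ^ (-d) * D ^ (d - u) = D ^ (-u) := by
            rw [← Real.rpow_add hD0]
            congr 1
            ring
          have h4 : (d - u) * (d - u)⁻¹ = 1 := mul_inv_cancel₀ hdu.ne'
          calc M * D ^ (-d) * (d - u) * (D ^ (d - u) / (d - u))
              = M * (D ^ (-d) * D ^ (d - u)) * ((d - u) * (d - u)⁻¹) := by ring
            _ = M * D ^ (-u) := by rw [h3, h4, mul_one]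
        have hsum : ENNReal.ofReal (A₁ * u + M * D ^ (-d) * (d - u))
              * ENNReal.ofReal (D ^ (d - u) / (d - u))
            ≤ 2 * ∫⁻ x in K, ENNReal.ofReal (dist x y) ^ (-u) ∂μ := by
          rw [ENNReal.ofReal_add (mul_nonneg hA₁pos.le hu.le)
            (mul_nonneg (mul_nonneg hM.le hDnd.le) hdu.le), add_mul, two_mul]
          exact add_le_add hl1 hl2
        have hmin : 2 * (min A₁ (M * D ^ (-d)) * d / 2) ≤ A₁ * u + M * D ^ (-d) * (d - u) := by
          have h1 := min_le_left A₁ (M * D ^ (-d))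
          have h2 := min_le_right A₁ (M * D ^ (-d))
          have e : min A₁ (M * D ^ (-d)) * d
              = min A₁ (M * D ^ (-d)) * u + min A₁ (M * D ^ (-d)) * (d - u) := by ring
          linarith [mul_le_mul_of_nonneg_right h1 hu.le,
            mul_le_mul_of_nonneg_right h2 (le_of_lt hdu)]
        have hfinal : 2 * (ENNReal.ofReal (min A₁ (M * D ^ (-d)) * d / 2)
              * ENNReal.ofReal (D ^ (d - u) / (d - u)))
            ≤ 2 * ∫⁻ x in K, ENNReal.ofReal (dist x y) ^ (-u) ∂μ := by
          refine le_trans ?_ hsum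
          rw [← mul_assoc, ← ENNReal.ofReal_ofNat 2, ← ENNReal.ofReal_mul (by norm_num)]
          exact mul_le_mul_left (ENNReal.ofReal_le_ofReal hmin) _
        exact (ENNReal.mul_le_mul_iff_right two_ne_zero ENNReal.ofNat_ne_top).1 hfinal
      · -- upper bound
        rw [hIJ, hJsplit]
        calc (∫⁻ t in Ioc (0:ℝ) T, μ.restrict K (Metric.closedBall y (t ^ (-u⁻¹))))
              + ∫⁻ t in Ioi T, μ.restrict K (Metric.closedBall y (t ^ (-u⁻¹)))
            ≤ ENNReal.ofReal (A₂ * D ^ d) * ENNReal.ofReal T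
              + ENNReal.ofReal A₂ * ENNReal.ofReal (D ^ (d - u) * (u / (d - u))) := by
              refine add_le_add hp1 (hp2.trans ?_)
              rw [hIoi]
          _ = ENNReal.ofReal (A₂ * D ^ (d - u) + A₂ * (D ^ (d - u) * (u / (d - u)))) := by
              have e1 : A₂ * D ^ d * T = A₂ * D ^ (d - u) := by
                rw [hTdef, mul_assoc, ← Real.rpow_add hD0, ← sub_eq_add_neg]
              rw [← ENNReal.ofReal_mul (mul_nonneg hA₂pos.le hDd.le), e1,
                ← ENNReal.ofReal_mul hA₂pos.le,
                ← ENNReal.ofReal_add (mul_nonneg hA₂pos.le hXpos.le)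
                  (mul_nonneg hA₂pos.le (mul_nonneg hXpos.le
                    (div_nonneg hu.le hdu.le)))]
          _ ≤ ENNReal.ofReal (A₂ * d) * ENNReal.ofReal (D ^ (d - u) / (d - u)) := by
              rw [← ENNReal.ofReal_mul (mul_nonneg hA₂pos.le hd0.le)]
              apply ENNReal.ofReal_le_ofReal
              refine le_of_eq ?_
              field_simp
              ring
    · -- d ≤ u
      have hRtop : ∫⁻ r in Ioo (0:ℝ) D, ENNReal.ofReal (r ^ (d - u - 1)) = ⊤ :=
        lint_Ioo_rpow_top hD0 (by linarith)
      have hItop : ∫⁻ x in K, ENNReal.ofReal (dist x y) ^ (-u) ∂μ = ⊤ := by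
        rw [hIJ, eq_top_iff]
        refine le_trans (le_of_eq ?_) hlowJ
        have hle : -1 ≤ -(d/u) := by
          rw [neg_le_neg_iff]
          exact (div_le_one hu).2 hud
        calc (⊤ : ENNReal) = ENNReal.ofReal A₁ * ⊤ := by
              rw [ENNReal.mul_top (ENNReal.ofReal_pos.2 hA₁pos).ne']
          _ = ENNReal.ofReal A₁ * ∫⁻ t in Ioi T, ENNReal.ofReal (t ^ (-(d/u))) := by
              rw [lint_Ioi_rpow_top hT0 hle]
          _ = ∫⁻ t in Ioi T, ENNReal.ofReal (A₁ * t ^ (-(d/u))) := by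
              simp_rw [ENNReal.ofReal_mul hA₁pos.le]
              rw [lintegral_const_mul' _ _ ENNReal.ofReal_ne_top]
      rw [hItop, hRtop]
      constructor
      · exact le_top
      · rw [ENNReal.mul_top (ENNReal.ofReal_pos.2 (mul_pos hA₂pos hd0)).ne']

end
end

section
/- Let 0 < s ≤ 1 and let K be a d-set in ℝⁿ with 0 < d ≤ n. If f : K → ℝ is Hölder continuous of exponent s, i.e. there is c > 0 with |f(x) − f(y)| ≤ c|x − y|^s for all x, y ∈ K, then the Hausdorff dimension of the graph Γ(f) = {(x, f(x)) : x ∈ K} ⊆ ℝ^{n+1} satisfies dim_H Γ(f) ≤ min{d + 1 − s, d/s}. -/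
open MeasureTheory Metric Set
open ENNReal NNReal Filter

noncomputable section

set_option linter.unusedSectionVars false
set_option linter.unusedVariables false

section Helpers

variable {X : Type*} [MetricSpace X] [MeasurableSpace X] [OpensMeasurableSpace X]

lemma count_bound (μ : Measure X) {K : Set X} {c₁ d r : ℝ}
    (hlow : ∀ x ∈ K, ENNReal.ofReal (c₁ * (r/3)^d) ≤ μ (closedBall x (r/3)))
    (hr : 0 < r) (F : Finset X) (hFK : ↑F ⊆ K)
    (hsep : ∀ x ∈ F, ∀ y ∈ F, x ≠ y → r ≤ dist x y) :
    (F.card : ℝ≥0∞) * ENNReal.ofReal (c₁ * (r/3)^d) ≤ μ Set.univ := by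
  have hdisj : (↑F : Set X).PairwiseDisjoint (fun x => closedBall x (r/3)) := by
    intro x hx y hy hxy
    exact closedBall_disjoint_closedBall (by nlinarith [hsep x hx y hy hxy])
  calc (F.card : ℝ≥0∞) * ENNReal.ofReal (c₁ * (r/3)^d)
      = ∑ _x ∈ F, ENNReal.ofReal (c₁ * (r/3)^d) := by
        rw [Finset.sum_const, nsmul_eq_mul]
    _ ≤ ∑ x ∈ F, μ (closedBall x (r/3)) :=
        Finset.sum_le_sum fun x hx => hlow x (hFK hx)
    _ = μ (⋃ x ∈ F, closedBall x (r/3)) :=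
        (measure_biUnion_finset hdisj fun x _ => measurableSet_closedBall).symm
    _ ≤ μ Set.univ := measure_mono (subset_univ _)

lemma exists_net (μ : Measure X) {K : Set X} {c₁ d r : ℝ} (hr : 0 < r)
    (hμtop : μ Set.univ < ⊤) (hε : 0 < c₁ * (r/3)^d)
    (hlow : ∀ x ∈ K, ENNReal.ofReal (c₁ * (r/3)^d) ≤ μ (closedBall x (r/3))) :
    ∃ T : Finset X, ↑T ⊆ K ∧ (K ⊆ ⋃ x ∈ T, closedBall x r) ∧
      (T.card : ℝ≥0∞) * ENNReal.ofReal (c₁ * (r/3)^d) ≤ μ Set.univ := by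
  set ε := ENNReal.ofReal (c₁ * (r/3)^d) with hεdef
  have hε0 : ε ≠ 0 := by simp [hεdef, ENNReal.ofReal_eq_zero, not_le, hε]
  set S : Set (Set X) := {M | M ⊆ K ∧ ∀ x ∈ M, ∀ y ∈ M, x ≠ y → r ≤ dist x y} with hSdef
  obtain ⟨M, hM⟩ := zorn_subset S (fun c hcS hchain => by
    refine ⟨⋃₀ c, ⟨?_, ?_⟩, fun t ht => subset_sUnion_of_mem ht⟩
    · exact sUnion_subset fun t ht => (hcS ht).1
    · rintro x ⟨t, htc, hxt⟩ y ⟨u, huc, hyu⟩ hxy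
      rcases hchain.total htc huc with h | h
      · exact (hcS huc).2 x (h hxt) y hyu hxy
      · exact (hcS htc).2 x hxt y (h hyu) hxy)
  have hMK : M ⊆ K := hM.prop.1
  have hMsep := hM.prop.2
  -- any finite subset has bounded cardinality
  have hcard : ∀ F : Finset X, ↑F ⊆ M → (F.card : ℝ≥0∞) * ε ≤ μ Set.univ := by
    intro F hFM
    exact count_bound μ hlow hr F (hFM.trans hMK)
      (fun x hx y hy hxy => hMsep x (hFM hx) y (hFM hy) hxy)
  have hMfin : M.Finite := by
    by_contra hinf'
    have hinf : M.Infinite := hinf'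
    obtain ⟨N, hN⟩ := ENNReal.exists_nat_gt (ENNReal.div_lt_top (ne_of_lt hμtop) hε0).ne
    obtain ⟨F, hFM, hFfin, hFcard⟩ := hinf.exists_subset_ncard_eq N
    have := hcard hFfin.toFinset (by simpa using hFM)
    rw [Set.ncard_eq_toFinset_card F hFfin] at hFcard
    rw [hFcard] at this
    have h2 : μ Set.univ / ε < (N : ℝ≥0∞) := hN
    rw [ENNReal.div_lt_iff (Or.inl hε0) (Or.inl (ENNReal.ofReal_ne_top))] at h2
    exact absurd this (not_le.mpr h2)
  refine ⟨hMfin.toFinset, by simpa using hMK, ?_, by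
    simpa using hcard hMfin.toFinset (by simp)⟩
  intro y hyK
  by_contra hy
  simp only [mem_iUnion, Set.Finite.mem_toFinset, not_exists, exists_prop] at hy
  have hy' : ∀ z ∈ M, y ∉ closedBall z r := by
    intro z hz
    exact fun hball => hy z ⟨hz, hball⟩
  have hynotM : y ∉ M := fun h => hy' y h (mem_closedBall_self hr.le)
  have hins : insert y M ∈ S := by
    constructor
    · exact insert_subset hyK hMK
    · intro a ha b hb hab
      have key : ∀ z ∈ M, r ≤ dist y z := by
        intro z hz
        have h2 := hy' z hz
        rw [mem_closedBall, not_le] at h2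
        exact h2.le
      rcases ha with rfl | ha
      · rcases hb with rfl | hb
        · exact absurd rfl hab
        · exact key b hb
      · rcases hb with rfl | hb
        · rw [dist_comm]; exact key a ha
        · exact hMsep a ha b hb hab
  have := hM.2 hins (subset_insert y M)
  exact hynotM (this (mem_insert y M))

end Helpers

section Helpers2

variable {X Y : Type*} [MetricSpace X] [MeasurableSpace X] [BorelSpace X]
  [MetricSpace Y] [MeasurableSpace Y] [BorelSpace Y]

lemma ediam_le_of_dist {Z : Type*} [MetricSpace Z] {s : Set Z} {D : ℝ}
    (h : ∀ p ∈ s, ∀ q ∈ s, dist p q ≤ D) :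
    EMetric.diam s ≤ ENNReal.ofReal D :=
  EMetric.diam_le fun p hp q hq => by
    rw [edist_dist]; exact ENNReal.ofReal_le_ofReal (h p hp q hq)

lemma dimH_le_of_net (μ : Measure X) {K : Set X} {c₁ d : ℝ} (hd0 : 0 < d) (hc₁ : 0 < c₁)
    (hμtop : μ Set.univ < ⊤)
    (hlow : ∀ r ∈ Set.Ioc (0:ℝ) 1, ∀ x ∈ K, ENNReal.ofReal (c₁ * r^d) ≤ μ (closedBall x r)) :
    dimH K ≤ ENNReal.ofReal d := by
  set ρ : ℕ → ℝ := fun k => 1/(k+1) with hρdef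
  have hρ0 : ∀ k, 0 < ρ k := fun k => by positivity
  have hρ1 : ∀ k, ρ k ≤ 1 := fun k => by
    rw [hρdef]
    rw [div_le_one (by positivity)]
    simp
  have hρ31 : ∀ k, ρ k / 3 ∈ Set.Ioc (0:ℝ) 1 := fun k =>
    ⟨by positivity, by linarith [hρ0 k, hρ1 k]⟩
  have hεpos : ∀ k, 0 < c₁ * (ρ k / 3)^d := fun k => by
    have := (hρ31 k).1; positivity
  choose T hTK hTcov hTcard using fun k =>
    exists_net μ (hρ0 k) hμtop (hεpos k) (fun x hx => hlow _ (hρ31 k) x hx)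
  set B := (μ Set.univ).toReal with hB
  have hBμ : μ Set.univ = ENNReal.ofReal B := (ENNReal.ofReal_toReal hμtop.ne).symm
  have hB0 : 0 ≤ B := ENNReal.toReal_nonneg
  -- the key Hausdorff measure bound
  have hμH : μH[d] K ≤ ENNReal.ofReal (B * (c₁)⁻¹ * 3^d * 2^d) := by
    have := Measure.hausdorffMeasure_le_liminf_sum (ι := fun k => {x // x ∈ T k}) d K
      (l := atTop) (fun k => ENNReal.ofReal (2 * ρ k))
      (by
        rw [show (0:ℝ≥0∞) = ENNReal.ofReal 0 by simp]
        apply ENNReal.tendsto_ofReal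
        have := tendsto_one_div_add_atTop_nhds_zero_nat (𝕜 := ℝ)
        simpa [hρdef] using this.const_mul 2)
      (fun k x => closedBall (x : X) (ρ k))
      (Eventually.of_forall fun k x => ediam_le_of_dist fun p hp q hq => by
        have := dist_triangle_right p q (x : X)
        rw [mem_closedBall] at hp hq
        linarith)
      (Eventually.of_forall fun k => by
        refine (hTcov k).trans ?_
        intro y hy
        rw [Set.mem_iUnion₂] at hy
        obtain ⟨x, hxT, hyx⟩ := hy
        exact Set.mem_iUnion.mpr ⟨⟨x, hxT⟩, hyx⟩)
    refine this.trans ?_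
    have hbound : ∀ k, (∑ i : {x // x ∈ T k}, EMetric.diam (closedBall (i : X) (ρ k)) ^ d)
        ≤ ENNReal.ofReal (B * (c₁)⁻¹ * 3^d * 2^d) := by
      intro k
      have h1 : ∀ i : {x // x ∈ T k}, EMetric.diam (closedBall (i : X) (ρ k)) ^ d
          ≤ ENNReal.ofReal ((2 * ρ k)^d) := by
        intro i
        have hd1 : EMetric.diam (closedBall (i : X) (ρ k)) ≤ ENNReal.ofReal (2 * ρ k) :=
          ediam_le_of_dist fun p hp q hq => by
            have := dist_triangle_right p q (i : X)
            rw [mem_closedBall] at hp hq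
            linarith
        calc EMetric.diam (closedBall (i : X) (ρ k)) ^ d
            ≤ (ENNReal.ofReal (2 * ρ k)) ^ d := ENNReal.rpow_le_rpow hd1 hd0.le
          _ = ENNReal.ofReal ((2 * ρ k)^d) := by
              rw [← ENNReal.ofReal_rpow_of_pos (by positivity)]
      calc (∑ i : {x // x ∈ T k}, EMetric.diam (closedBall (i : X) (ρ k)) ^ d)
          ≤ ∑ _i : {x // x ∈ T k}, ENNReal.ofReal ((2 * ρ k)^d) :=
            Finset.sum_le_sum fun i _ => h1 i
        _ = ((T k).card : ℝ≥0∞) * ENNReal.ofReal ((2 * ρ k)^d) := by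
            rw [Finset.sum_const, nsmul_eq_mul]
            congr 1
            simp [Fintype.card_coe]
        _ ≤ (μ Set.univ / ENNReal.ofReal (c₁ * (ρ k / 3)^d)) * ENNReal.ofReal ((2 * ρ k)^d) := by
            apply mul_le_mul_left
            rw [ENNReal.le_div_iff_mul_le
              (Or.inl (by simp [ENNReal.ofReal_eq_zero, not_le, hεpos k]))
              (Or.inl ENNReal.ofReal_ne_top)]
            exact hTcard k
        _ = ENNReal.ofReal (B * (c₁ * (ρ k / 3)^d)⁻¹ * (2 * ρ k)^d) := by
            rw [hBμ, div_eq_mul_inv, ← ENNReal.ofReal_inv_of_pos (hεpos k),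
              ← ENNReal.ofReal_mul hB0, ← ENNReal.ofReal_mul (by positivity)]
        _ ≤ ENNReal.ofReal (B * (c₁)⁻¹ * 3^d * 2^d) := by
            apply ENNReal.ofReal_le_ofReal
            apply le_of_eq
            have h3 : ((3:ℝ))^d ≠ 0 := by positivity
            have hρd : (ρ k)^d ≠ 0 := by positivity
            rw [Real.div_rpow (hρ0 k).le (by norm_num), Real.mul_rpow (by norm_num) (hρ0 k).le]
            field_simp
    calc liminf (fun k => ∑ i : {x // x ∈ T k}, EMetric.diam (closedBall (i : X) (ρ k)) ^ d) atTop
        ≤ liminf (fun _ : ℕ => ENNReal.ofReal (B * (c₁)⁻¹ * 3^d * 2^d)) atTop :=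
          liminf_le_liminf (Eventually.of_forall hbound)
      _ = ENNReal.ofReal (B * (c₁)⁻¹ * 3^d * 2^d) := liminf_const _
  have hne : μH[(d.toNNReal : ℝ)] K ≠ ⊤ := by
    rw [Real.coe_toNNReal d hd0.le]
    exact (hμH.trans_lt ENNReal.ofReal_lt_top).ne
  have := dimH_le_of_hausdorffMeasure_ne_top hne
  rwa [show ((d.toNNReal : ℝ≥0∞)) = ENNReal.ofReal d from rfl] at this

lemma dimH_image_le_of_net (μ : Measure X) {K : Set X} {c₁ d c s : ℝ}
    (hd0 : 0 < d) (hc₁ : 0 < c₁) (hc : 0 < c) (hs0 : 0 < s) (hs1 : s ≤ 1)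
    (hμtop : μ Set.univ < ⊤)
    (hlow : ∀ r ∈ Set.Ioc (0:ℝ) 1, ∀ x ∈ K, ENNReal.ofReal (c₁ * r^d) ≤ μ (closedBall x r))
    (g : X → Y) (f : X → ℝ)
    (hg : ∀ y z, dist (g y) (g z) ≤ dist y z + |f y - f z|)
    (hHol : ∀ x ∈ K, ∀ y ∈ K, |f x - f y| ≤ c * dist x y ^ s) :
    dimH (g '' K) ≤ ENNReal.ofReal (d + 1 - s) := by
  refine dimH_le fun d' hd' => ?_
  by_contra hlt
  rw [not_le] at hlt
  set t : ℝ := (d' : ℝ) with htdef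
  have ht0 : 0 ≤ t := d'.coe_nonneg
  have hds0 : 0 < d + 1 - s := by linarith
  have htgt : d + 1 - s < t := by
    rwa [← ENNReal.ofReal_coe_nnreal, ENNReal.ofReal_lt_ofReal_iff_of_nonneg hds0.le] at hlt
  have ha0 : 0 < t - (d + 1 - s) := by linarith
  set a : ℝ := t - (d + 1 - s) with hadef
  -- scales
  set ρ : ℕ → ℝ := fun k => 1/(k+1) with hρdef
  have hρ0 : ∀ k, 0 < ρ k := fun k => by positivity
  have hρ1 : ∀ k, ρ k ≤ 1 := fun k => by
    rw [hρdef, div_le_one (by positivity)]; simp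
  have hρ31 : ∀ k, ρ k / 3 ∈ Set.Ioc (0:ℝ) 1 := fun k =>
    ⟨by positivity, by linarith [hρ0 k, hρ1 k]⟩
  have hεpos : ∀ k, 0 < c₁ * (ρ k / 3)^d := fun k => by
    have := (hρ31 k).1; positivity
  choose T hTK hTcov hTcard using fun k =>
    exists_net μ (hρ0 k) hμtop (hεpos k) (fun x hx => hlow _ (hρ31 k) x hx)
  set B := (μ Set.univ).toReal with hB
  have hBμ : μ Set.univ = ENNReal.ofReal B := (ENNReal.ofReal_toReal hμtop.ne).symm
  have hB0 : 0 ≤ B := ENNReal.toReal_nonneg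
  set m : ℕ → ℕ := fun k => ⌈2*c*(ρ k)^(s-1)⌉₊ + 1 with hmdef
  -- the covering sets
  set cov : ∀ k : ℕ, ({x // x ∈ T k} × Fin (m k)) → Set Y := fun k i =>
    g '' (K ∩ closedBall (i.1 : X) (ρ k) ∩
      f ⁻¹' Set.Icc (f (i.1 : X) - c * ρ k ^ s + ((i.2 : ℕ) : ℝ) * ρ k)
        (f (i.1 : X) - c * ρ k ^ s + (((i.2 : ℕ) : ℝ) + 1) * ρ k)) with hcovdef
  -- diameter bound
  have hdiam : ∀ k i, EMetric.diam (cov k i) ≤ ENNReal.ofReal (3 * ρ k) := by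
    intro k i
    apply ediam_le_of_dist
    rintro p ⟨y, ⟨⟨hyK, hyb⟩, hyI⟩, rfl⟩ q ⟨z, ⟨⟨hzK, hzb⟩, hzI⟩, rfl⟩
    have h1 : dist y z ≤ 2 * ρ k := by
      have := dist_triangle_right y z (i.1 : X)
      rw [mem_closedBall] at hyb hzb
      linarith
    have h2 : |f y - f z| ≤ ρ k := by
      rw [Set.mem_preimage, Set.mem_Icc] at hyI hzI
      rw [abs_le]
      constructor <;> nlinarith [hyI.1, hyI.2, hzI.1, hzI.2, hρ0 k]
    calc dist (g y) (g z) ≤ dist y z + |f y - f z| := hg y z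
      _ ≤ 3 * ρ k := by linarith
  -- covering
  have hcov : ∀ k, g '' K ⊆ ⋃ i, cov k i := by
    intro k p hp
    obtain ⟨y, hyK, rfl⟩ := hp
    obtain ⟨x, hxT, hyx⟩ := Set.mem_iUnion₂.mp (hTcov k hyK)
    have hxK : (x : X) ∈ K := hTK k hxT
    have hosc : |f y - f x| ≤ c * ρ k ^ s := by
      have h1 := hHol y hyK x hxK
      have h2 : dist y x ^ s ≤ ρ k ^ s :=
        Real.rpow_le_rpow dist_nonneg (mem_closedBall.mp hyx) hs0.le
      nlinarith
    set u : ℝ := (f y - (f x - c * ρ k ^ s)) / ρ k with hudef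
    have hu0 : 0 ≤ u := by
      apply div_nonneg _ (hρ0 k).le
      have := abs_le.mp hosc
      linarith [this.1]
    have huρ : u * ρ k = f y - (f x - c * ρ k ^ s) := by
      rw [hudef, div_mul_cancel₀ _ (hρ0 k).ne']
    have hub : u ≤ 2*c*(ρ k)^(s-1) := by
      have h3 : f y - (f x - c * ρ k ^ s) ≤ 2 * c * ρ k ^ s := by
        linarith [(abs_le.mp hosc).2]
      have h4 : (ρ k)^(s-1) = ρ k ^ s / ρ k := by
        rw [Real.rpow_sub (hρ0 k), Real.rpow_one]
      rw [hudef, h4, div_le_iff₀ (hρ0 k)]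
      have h5 : 2*c*(ρ k ^ s / ρ k) * ρ k = 2*c* ρ k ^ s := by
        field_simp [(hρ0 k).ne']
      rw [h5]
      exact h3
    have hj : ⌊u⌋₊ < m k := by
      rw [hmdef]
      exact Nat.lt_succ_of_le ((Nat.floor_mono hub).trans (Nat.floor_le_ceil _))
    refine Set.mem_iUnion.mpr ⟨(⟨x, hxT⟩, ⟨⌊u⌋₊, hj⟩), ⟨y, ⟨⟨hyK, hyx⟩, ?_⟩, rfl⟩⟩
    rw [Set.mem_preimage, Set.mem_Icc]
    constructor
    · have := Nat.floor_le hu0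
      have h5 : (⌊u⌋₊ : ℝ) * ρ k ≤ u * ρ k := mul_le_mul_of_nonneg_right this (hρ0 k).le
      rw [huρ] at h5
      simp only [Fin.val_mk]
      linarith
    · have := Nat.lt_floor_add_one u
      have h5 : u * ρ k ≤ ((⌊u⌋₊ : ℝ) + 1) * ρ k :=
        mul_le_mul_of_nonneg_right this.le (hρ0 k).le
      rw [huρ] at h5
      simp only [Fin.val_mk]
      linarith
  -- count bounds in ENNReal
  have hNle : ∀ k, ((T k).card : ℝ≥0∞) ≤ ENNReal.ofReal (B * (c₁ * (ρ k / 3)^d)⁻¹) := by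
    intro k
    have h1 : ((T k).card : ℝ≥0∞) ≤ μ Set.univ / ENNReal.ofReal (c₁ * (ρ k / 3)^d) := by
      rw [ENNReal.le_div_iff_mul_le (Or.inl (by simp [ENNReal.ofReal_eq_zero, not_le, hεpos k]))
        (Or.inl ENNReal.ofReal_ne_top)]
      exact hTcard k
    rwa [hBμ, div_eq_mul_inv, ← ENNReal.ofReal_inv_of_pos (hεpos k),
      ← ENNReal.ofReal_mul hB0] at h1
  have hmle : ∀ k, ((m k : ℕ) : ℝ≥0∞) ≤ ENNReal.ofReal ((2*c+2) * ρ k ^ (s-1)) := by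
    intro k
    rw [← ENNReal.ofReal_natCast]
    apply ENNReal.ofReal_le_ofReal
    have h1 : (⌈2*c*(ρ k)^(s-1)⌉₊ : ℝ) < 2*c*(ρ k)^(s-1) + 1 :=
      Nat.ceil_lt_add_one (by positivity)
    have h2 : (1:ℝ) ≤ ρ k ^ (s-1) :=
      Real.one_le_rpow_of_pos_of_le_one_of_nonpos (hρ0 k) (hρ1 k) (by linarith)
    have h3 : ((m k : ℕ) : ℝ) = (⌈2*c*(ρ k)^(s-1)⌉₊ : ℝ) + 1 := by
      rw [hmdef]; push_cast; ring
    rw [h3]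
    nlinarith
  set v : ℕ → ℝ := fun k =>
    B * (c₁ * (ρ k / 3)^d)⁻¹ * ((2*c+2) * ρ k ^ (s-1)) * (3*ρ k)^t with hvdef
  have hsum : ∀ k, (∑ i : ({x // x ∈ T k} × Fin (m k)), EMetric.diam (cov k i) ^ t)
      ≤ ENNReal.ofReal (v k) := by
    intro k
    have hεk := hεpos k
    have hρk := hρ0 k
    calc ∑ i : ({x // x ∈ T k} × Fin (m k)), EMetric.diam (cov k i) ^ t
        ≤ ∑ _i : ({x // x ∈ T k} × Fin (m k)), ENNReal.ofReal ((3*ρ k)^t) := by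
          apply Finset.sum_le_sum
          intro i _
          calc EMetric.diam (cov k i) ^ t ≤ (ENNReal.ofReal (3 * ρ k)) ^ t :=
              ENNReal.rpow_le_rpow (hdiam k i) ht0
            _ = ENNReal.ofReal ((3*ρ k)^t) := by
                rw [← ENNReal.ofReal_rpow_of_pos (by positivity)]
      _ = (((T k).card * m k : ℕ) : ℝ≥0∞) * ENNReal.ofReal ((3*ρ k)^t) := by
          rw [Finset.sum_const, nsmul_eq_mul]
          congr 2
          simp [Fintype.card_prod, Fintype.card_coe]
      _ ≤ ENNReal.ofReal (B * (c₁ * (ρ k / 3)^d)⁻¹) * ENNReal.ofReal ((2*c+2) * ρ k ^ (s-1))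
            * ENNReal.ofReal ((3*ρ k)^t) := by
          rw [Nat.cast_mul]
          exact mul_le_mul' (mul_le_mul' (hNle k) (hmle k)) le_rfl
      _ = ENNReal.ofReal (v k) := by
          rw [← ENNReal.ofReal_mul (by positivity), ← ENNReal.ofReal_mul (by positivity)]
  set Cst : ℝ := B * c₁⁻¹ * 3^d * (2*c+2) * 3^t with hCst
  have hveq : ∀ k, v k = Cst * ρ k ^ a := by
    intro k
    have hρd : (0:ℝ) < ρ k ^ d := by positivity
    have h3d : (0:ℝ) < (3:ℝ)^d := by positivity
    have hρa : ρ k ^ a = ρ k ^ t * ρ k ^ (s-1) / ρ k ^ d := by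
      rw [hadef, show t - (d+1-s) = t + (s-1) - d by ring, Real.rpow_sub (hρ0 k),
        Real.rpow_add (hρ0 k)]
    rw [hvdef]
    simp only
    rw [Real.div_rpow (hρ0 k).le (by norm_num : (0:ℝ) ≤ 3),
      Real.mul_rpow (by norm_num : (0:ℝ) ≤ 3) (hρ0 k).le, hCst, hρa]
    field_simp
  have htendv : Tendsto v atTop (nhds 0) := by
    have hρa : ∀ k : ℕ, ρ k ^ a = ((k:ℝ)+1) ^ (-a) := by
      intro k
      rw [hρdef]
      simp only [one_div]
      rw [Real.inv_rpow (by positivity), ← Real.rpow_neg (by positivity)]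
    have h1 : Tendsto (fun k : ℕ => ((k:ℝ)+1) ^ (-a)) atTop (nhds 0) :=
      (tendsto_rpow_neg_atTop ha0).comp
        (tendsto_atTop_add_const_right atTop 1 tendsto_natCast_atTop_atTop)
    have h2 : Tendsto (fun k : ℕ => ρ k ^ a) atTop (nhds 0) := by
      simpa only [hρa] using h1
    have h3 := h2.const_mul Cst
    rw [mul_zero] at h3
    have h4 : v = fun k => Cst * ρ k ^ a := funext hveq
    rw [h4]
    exact h3
  have htend : Tendsto (fun k => ENNReal.ofReal (v k)) atTop (nhds 0) := by
    rw [show (0:ℝ≥0∞) = ENNReal.ofReal 0 by simp]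
    exact ENNReal.tendsto_ofReal htendv
  have hμHle : μH[t] (g '' K) ≤
      liminf (fun k => ∑ i : ({x // x ∈ T k} × Fin (m k)), EMetric.diam (cov k i) ^ t) atTop := by
    apply Measure.hausdorffMeasure_le_liminf_sum t (g '' K)
      (fun k => ENNReal.ofReal (3 * ρ k))
      (by
        rw [show (0:ℝ≥0∞) = ENNReal.ofReal 0 by simp]
        apply ENNReal.tendsto_ofReal
        have := tendsto_one_div_add_atTop_nhds_zero_nat (𝕜 := ℝ)
        simpa [hρdef] using this.const_mul 3)
      cov (Eventually.of_forall hdiam) (Eventually.of_forall hcov)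
  have hzero : μH[t] (g '' K) = 0 := by
    have h1 : liminf (fun k => ∑ i : ({x // x ∈ T k} × Fin (m k)),
        EMetric.diam (cov k i) ^ t) atTop ≤ liminf (fun k => ENNReal.ofReal (v k)) atTop :=
      liminf_le_liminf (Eventually.of_forall hsum)
    have h2 : liminf (fun k => ENNReal.ofReal (v k)) atTop = 0 := htend.liminf_eq
    exact le_antisymm (hμHle.trans (h1.trans h2.le)) (by positivity)
  rw [hd'] at hzero
  exact ENNReal.top_ne_zero hzero

end Helpers2

lemma graph_dist {n : ℕ} (f : EuclideanSpace ℝ (Fin n) → ℝ) (y z : EuclideanSpace ℝ (Fin n)) :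
    dist ((EuclideanSpace.equiv (Fin (n + 1)) ℝ).symm
        (Fin.snoc (EuclideanSpace.equiv (Fin n) ℝ y) (f y)))
      ((EuclideanSpace.equiv (Fin (n + 1)) ℝ).symm
        (Fin.snoc (EuclideanSpace.equiv (Fin n) ℝ z) (f z)))
      ≤ dist y z + |f y - f z| := by
  rw [EuclideanSpace.dist_eq]
  have hyz : dist y z = Real.sqrt (∑ i, dist (y i) (z i) ^ 2) := EuclideanSpace.dist_eq y z
  have happ : ∀ (p : Fin (n+1) → ℝ) (i : Fin (n+1)),
      ((EuclideanSpace.equiv (Fin (n+1)) ℝ).symm p) i = p i := fun p i => rfl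
  have happ2 : ∀ (w : EuclideanSpace ℝ (Fin n)) (i : Fin n),
      (EuclideanSpace.equiv (Fin n) ℝ w) i = w i := fun w i => rfl
  rw [Fin.sum_univ_castSucc]
  simp only [happ, happ2, Fin.snoc_castSucc, Fin.snoc_last]
  have h1 : ∑ i : Fin n, dist (y i) (z i) ^ 2 = dist y z ^ 2 := by
    rw [hyz, Real.sq_sqrt (Finset.sum_nonneg fun i _ => sq_nonneg _)]
  rw [h1]
  have hd0 : (0:ℝ) ≤ dist y z := dist_nonneg
  have ha0 : (0:ℝ) ≤ |f y - f z| := abs_nonneg _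
  have h2 : dist (f y) (f z) = |f y - f z| := Real.dist_eq _ _
  rw [h2]
  have : dist y z ^ 2 + |f y - f z| ^ 2 ≤ (dist y z + |f y - f z|) ^ 2 := by nlinarith
  calc Real.sqrt (dist y z ^ 2 + |f y - f z| ^ 2)
      ≤ Real.sqrt ((dist y z + |f y - f z|) ^ 2) := Real.sqrt_le_sqrt this
    _ = dist y z + |f y - f z| := Real.sqrt_sq (by positivity)

/-- If `0 < s ≤ 1`, `K` is a `d`-set in `ℝⁿ` with `0 < d ≤ n` and `f` is Hölder continuous of
exponent `s` on `K`, then `dim_H Γ(f) ≤ min {d + 1 - s, d/s}`. -/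
theorem dimH_graph_le_of_holder {n : ℕ} (s : ℝ) (hs0 : 0 < s) (hs1 : s ≤ 1)
    (d : ℝ) (hd0 : 0 < d) (hdn : d ≤ n)
    (μ : Measure (EuclideanSpace ℝ (Fin n))) (K : Set (EuclideanSpace ℝ (Fin n)))
    (hK : IsDSet d μ K) (f : EuclideanSpace ℝ (Fin n) → ℝ)
    (hf : ∃ c : ℝ, 0 < c ∧ ∀ x ∈ K, ∀ y ∈ K, |f x - f y| ≤ c * dist x y ^ s) :
    dimH (graphOn K f) ≤ ENNReal.ofReal (min (d + 1 - s) (d / s)) := by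
  obtain ⟨hKcomp, hμK, hsupp, hμ0, hμtop, c₁, c₂, hc₁, hc₂, hball⟩ := hK
  obtain ⟨c, hc, hHol⟩ := hf
  set g : EuclideanSpace ℝ (Fin n) → EuclideanSpace ℝ (Fin (n+1)) := fun x =>
    (EuclideanSpace.equiv (Fin (n + 1)) ℝ).symm
      (Fin.snoc (EuclideanSpace.equiv (Fin n) ℝ x) (f x)) with hgdef
  have hgraph : graphOn K f = g '' K := rfl
  have hlow : ∀ r ∈ Set.Ioc (0:ℝ) 1, ∀ x ∈ K,
      ENNReal.ofReal (c₁ * r^d) ≤ μ (closedBall x r) :=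
    fun r hr x hx => (hball r hr x hx).1
  -- Bound 2 : d + 1 - s
  have hBound2 : dimH (graphOn K f) ≤ ENNReal.ofReal (d + 1 - s) := by
    rw [hgraph]
    exact dimH_image_le_of_net μ hd0 hc₁ hc hs0 hs1 hμtop hlow g f
      (fun y z => graph_dist f y z) hHol
  -- Bound 1 : d / s
  have hBound1 : dimH (graphOn K f) ≤ ENNReal.ofReal (d / s) := by
    have hdimK : dimH K ≤ ENNReal.ofReal d := dimH_le_of_net μ hd0 hc₁ hμtop hlow
    set D : ℝ := Metric.diam K with hD
    have hD0 : 0 ≤ D := Metric.diam_nonneg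
    set C' : ℝ := D ^ (1-s) + c with hC'
    have hC'0 : 0 ≤ C' := by positivity
    have hHolder : HolderOnWith C'.toNNReal s.toNNReal g K := by
      intro x hx y hy
      rcases eq_or_ne x y with rfl | hxy
      · simp
      have hdist0 : 0 < dist x y := dist_pos.mpr hxy
      have hdistD : dist x y ≤ D := Metric.dist_le_diam_of_mem hKcomp.isBounded hx hy
      have hreal : dist (g x) (g y) ≤ C' * dist x y ^ s := by
        have h1 := graph_dist f x y
        have h2 := hHol x hx y hy
        have h3 : dist x y ≤ D ^ (1-s) * dist x y ^ s := by
          have h4 : dist x y = dist x y ^ (1-s) * dist x y ^ s := by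
            rw [← Real.rpow_add hdist0]
            norm_num
          calc dist x y = dist x y ^ (1-s) * dist x y ^ s := h4
            _ ≤ D ^ (1-s) * dist x y ^ s :=
              mul_le_mul_of_nonneg_right
                (Real.rpow_le_rpow dist_nonneg hdistD (by linarith))
                (Real.rpow_nonneg dist_nonneg s)
        have h1' : dist (g x) (g y) ≤ dist x y + |f x - f y| := h1
        rw [hC']
        nlinarith [Real.rpow_nonneg (dist_nonneg (x := x) (y := y)) s]
      rw [edist_dist, edist_dist]
      have hcoe : ((s.toNNReal : ℝ)) = s := Real.coe_toNNReal _ hs0.le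
      rw [hcoe]
      calc ENNReal.ofReal (dist (g x) (g y)) ≤ ENNReal.ofReal (C' * dist x y ^ s) :=
          ENNReal.ofReal_le_ofReal hreal
        _ = (C'.toNNReal : ℝ≥0∞) * ENNReal.ofReal (dist x y ^ s) := by
            rw [ENNReal.ofReal_mul hC'0]; rfl
        _ = (C'.toNNReal : ℝ≥0∞) * ENNReal.ofReal (dist x y) ^ s := by
            rw [ENNReal.ofReal_rpow_of_pos hdist0]
    have h5 := hHolder.dimH_image_le (by simpa using Real.toNNReal_pos.mpr hs0)
    rw [hgraph]
    refine h5.trans ?_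
    have h6 : ((s.toNNReal : ℝ≥0) : ℝ≥0∞) = ENNReal.ofReal s := rfl
    calc dimH K / (s.toNNReal : ℝ≥0∞) ≤ ENNReal.ofReal d / (s.toNNReal : ℝ≥0∞) :=
        ENNReal.div_le_div_right hdimK _
      _ = ENNReal.ofReal d / ENNReal.ofReal s := by rw [h6]
      _ = ENNReal.ofReal (d / s) := (ENNReal.ofReal_div_of_pos hs0).symm
  rcases le_total (d + 1 - s) (d / s) with h | h
  · rwa [min_eq_left h]
  · rwa [min_eq_right h]

end
end

section
/- Let 0 < s ≤ 1 and let K be a d-set in ℝⁿ with 0 < d ≤ n. If f : K → ℝ is Hölder continuous of exponent s, then the upper box counting dimension of the graph Γ(f) ⊆ ℝ^{n+1} satisfies ͞dim_B Γ(f) ≤ d + 1 − s. -/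
open MeasureTheory Metric Set
open scoped ENNReal NNReal

noncomputable section

/-- The dyadic `N`-cube of side length `2^{-j}` centered at `2^{-j} m`, `m ∈ ℤᴺ`. -/
def dyadicCube (N j : ℕ) (m : Fin N → ℤ) : Set (EuclideanSpace ℝ (Fin N)) :=
  {x | ∀ i, |x i - (2 : ℝ) ^ (-(j : ℤ)) * (m i : ℝ)| ≤ (2 : ℝ) ^ (-(j : ℤ)) / 2}

/-- The number of dyadic cubes of side length `2^{-j}` (centered at the points `2^{-j}m`,
`m ∈ ℤᴺ`) which intersect `E`. -/
noncomputable def boxCount {N : ℕ} (E : Set (EuclideanSpace ℝ (Fin N))) (j : ℕ) : ℕ :=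
  Set.ncard {m : Fin N → ℤ | (dyadicCube N j m ∩ E).Nonempty}

/-- The upper box counting dimension `limsup_j log₂(N_j(E))/j` of a set `E`. -/
noncomputable def upperBoxDim {N : ℕ} (E : Set (EuclideanSpace ℝ (Fin N))) : ℝ :=
  Filter.limsup (fun j : ℕ => Real.logb 2 (boxCount E j) / j) Filter.atTop

lemma coord_abs_le_dist {N : ℕ} (x y : EuclideanSpace ℝ (Fin N)) (i : Fin N) :
    |x i - y i| ≤ dist x y := by
  rw [EuclideanSpace.dist_eq]
  have h1 : |x i - y i| = Real.sqrt (dist (x i) (y i) ^ 2) := by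
    rw [Real.sqrt_sq_eq_abs, Real.dist_eq, abs_abs]
  rw [h1]
  exact Real.sqrt_le_sqrt (Finset.single_le_sum (f := fun k => dist (x k) (y k) ^ 2) (fun j _ => sq_nonneg _) (Finset.mem_univ i))

lemma dist_le_of_coord {N : ℕ} {x y : EuclideanSpace ℝ (Fin N)} {a : ℝ} (ha : 0 ≤ a)
    (h : ∀ i, |x i - y i| ≤ a) : dist x y ≤ Real.sqrt N * a := by
  rw [EuclideanSpace.dist_eq]
  have h2 : ∑ i, dist (x i) (y i) ^ 2 ≤ (N : ℝ) * a ^ 2 := by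
    calc ∑ i, dist (x i) (y i) ^ 2 ≤ ∑ _i : Fin N, a ^ 2 := by
          refine Finset.sum_le_sum fun i _ => ?_
          have := h i
          rw [Real.dist_eq]
          nlinarith [abs_nonneg (x i - y i), sq_abs (x i - y i)]
      _ = (N : ℝ) * a ^ 2 := by simp [Finset.sum_const, Finset.card_univ]
  calc Real.sqrt (∑ i, dist (x i) (y i) ^ 2) ≤ Real.sqrt ((N : ℝ) * a ^ 2) :=
        Real.sqrt_le_sqrt h2
    _ = Real.sqrt N * a := by
        rw [Real.sqrt_mul (Nat.cast_nonneg N), Real.sqrt_sq ha]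

lemma finite_boxSet {N j : ℕ} {E : Set (EuclideanSpace ℝ (Fin N))}
    (hE : Bornology.IsBounded E) :
    {m : Fin N → ℤ | (dyadicCube N j m ∩ E).Nonempty}.Finite := by
  obtain ⟨R, hR⟩ := hE.subset_closedBall 0
  set B : ℤ := ⌈(2:ℝ) ^ j * (R + 1)⌉
  apply (Set.Finite.pi' (t := fun _ : Fin N => Set.Icc (-B) B)
    (fun _ => Set.finite_Icc _ _)).subset
  rintro m ⟨p, hpc, hpE⟩
  set w : ℝ := (2 : ℝ) ^ (-(j : ℤ)) with hw
  have hw0 : 0 < w := by positivity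
  have hw1 : w ≤ 1 := by
    rw [hw]
    apply zpow_le_one_of_nonpos₀ (by norm_num)
    simp
  have hwinv : w⁻¹ = (2:ℝ) ^ j := by
    rw [hw, ← zpow_natCast (2:ℝ) j, ← zpow_neg]
    simp
  intro i
  have h1 : |p i - w * (m i : ℝ)| ≤ w / 2 := hpc i
  have h2 : |p i| ≤ R := by
    have := coord_abs_le_dist p 0 i
    have h0 : (0 : EuclideanSpace ℝ (Fin N)) i = 0 := rfl
    rw [h0, sub_zero] at this
    exact this.trans (mem_closedBall.mp (hR hpE))
  have h3 : w * |(m i : ℝ)| ≤ R + 1 := by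
    have : |w * (m i : ℝ)| ≤ |p i| + w / 2 := by
      have := abs_sub_abs_le_abs_sub (w * (m i : ℝ)) (p i)
      rw [abs_sub_comm] at this
      linarith
    rw [abs_mul, abs_of_pos hw0] at this
    linarith
  have h4 : |(m i : ℝ)| ≤ (2:ℝ) ^ j * (R + 1) := by
    rw [← hwinv]
    rw [inv_mul_eq_div, le_div_iff₀ hw0] at *
    nlinarith [abs_nonneg ((m i : ℝ))]
  have h5 : |(m i : ℝ)| ≤ (B : ℝ) := h4.trans (Int.le_ceil _)
  have h6 : |m i| ≤ B := by exact_mod_cast (by rwa [← Int.cast_abs] at h5 : ((|m i| : ℤ) : ℝ) ≤ (B:ℝ))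
  simp only [Set.mem_Icc]
  constructor <;> [linarith [neg_abs_le (m i)]; linarith [le_abs_self (m i)]]

lemma card_boxSet_of_measure {n j : ℕ} {d c₁ : ℝ} {μ : Measure (EuclideanSpace ℝ (Fin n))}
    {K : Set (EuclideanSpace ℝ (Fin n))}
    (hμfin : μ Set.univ < ⊤)
    (hlow : ∀ x ∈ K, ENNReal.ofReal (c₁ * ((2:ℝ) ^ (-(j:ℤ))) ^ d)
      ≤ μ (Metric.closedBall x ((2:ℝ) ^ (-(j:ℤ)))))
    (hfin : {m : Fin n → ℤ | (dyadicCube n j m ∩ K).Nonempty}.Finite) :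
    ({m : Fin n → ℤ | (dyadicCube n j m ∩ K).Nonempty}.ncard : ℝ) * (c₁ * ((2:ℝ) ^ (-(j:ℤ))) ^ d)
      ≤ 4 ^ n * (μ Set.univ).toReal := by
  classical
  set w : ℝ := (2:ℝ) ^ (-(j:ℤ)) with hw
  have hw0 : 0 < w := by positivity
  set Sf := hfin.toFinset with hSf
  have hSmem : ∀ m ∈ Sf, ∃ p, p ∈ dyadicCube n j m ∧ p ∈ K := by
    intro m hm
    rw [hSf, Set.Finite.mem_toFinset] at hm
    obtain ⟨p, hp1, hp2⟩ := hm; exact ⟨p, hp1, hp2⟩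
  choose! x hx1 hx2 using hSmem
  have key : ∀ v : Fin n → ZMod 4,
      ((Sf.filter (fun m => (fun i => ((m i : ℤ) : ZMod 4)) = v)).card : ℝ) * (c₁ * w ^ d)
        ≤ (μ Set.univ).toReal := by
    intro v
    set Tv := Sf.filter (fun m => (fun i => ((m i : ℤ) : ZMod 4)) = v) with hTv
    have hmemS : ∀ m ∈ Tv, m ∈ Sf := fun m hm => Finset.mem_of_mem_filter _ hm
    have hdisj : (Tv : Set (Fin n → ℤ)).PairwiseDisjoint
        (fun m => Metric.closedBall (x m) w) := by
      intro m₁ hm₁ m₂ hm₂ hne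
      rw [Finset.mem_coe, hTv, Finset.mem_filter] at hm₁ hm₂
      obtain ⟨i, hi⟩ : ∃ i, m₁ i ≠ m₂ i := by
        by_contra h; push_neg at h; exact hne (funext h)
      have hmod : ((m₁ i : ℤ) : ZMod 4) = ((m₂ i : ℤ) : ZMod 4) := by
        have e₁ : ((m₁ i : ℤ) : ZMod 4) = v i := congrFun hm₁.2 i
        have e₂ : ((m₂ i : ℤ) : ZMod 4) = v i := congrFun hm₂.2 i
        rw [e₁, e₂]
      have hdvd : (4:ℤ) ∣ m₁ i - m₂ i := by
        have : ((m₁ i - m₂ i : ℤ) : ZMod 4) = 0 := by push_cast [hmod]; ring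
        exact_mod_cast (ZMod.intCast_zmod_eq_zero_iff_dvd _ 4).mp this
      have habs : (4:ℤ) ≤ |m₁ i - m₂ i| :=
        Int.le_of_dvd (abs_pos.mpr (sub_ne_zero.mpr hi)) ((dvd_abs _ _).mpr hdvd)
      have habsR : (4:ℝ) ≤ |(m₁ i : ℝ) - (m₂ i : ℝ)| := by
        have : ((4:ℤ) : ℝ) ≤ ((|m₁ i - m₂ i| : ℤ) : ℝ) := by exact_mod_cast habs
        rwa [Int.cast_abs, Int.cast_sub] at this
      have h4w : 4 * w ≤ |w * (m₁ i : ℝ) - w * (m₂ i : ℝ)| := by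
        rw [← mul_sub, abs_mul, abs_of_pos hw0]
        nlinarith
      have hm₁S : m₁ ∈ Sf := hm₁.1
      have hm₂S : m₂ ∈ Sf := hm₂.1
      have t1 : |x m₁ i - w * (m₁ i : ℝ)| ≤ w / 2 := hx1 _ hm₁S i
      have t2 : |x m₂ i - w * (m₂ i : ℝ)| ≤ w / 2 := hx1 _ hm₂S i
      have hco := coord_abs_le_dist (x m₁) (x m₂) i
      have t3 : |w * (m₁ i : ℝ) - w * (m₂ i : ℝ)|
          ≤ |w * (m₁ i : ℝ) - x m₁ i| + |x m₁ i - x m₂ i| + |x m₂ i - w * (m₂ i : ℝ)| := by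
        calc |w * (m₁ i : ℝ) - w * (m₂ i : ℝ)|
            ≤ |w * (m₁ i : ℝ) - x m₁ i| + |x m₁ i - w * (m₂ i : ℝ)| := abs_sub_le _ _ _
          _ ≤ |w * (m₁ i : ℝ) - x m₁ i|
              + (|x m₁ i - x m₂ i| + |x m₂ i - w * (m₂ i : ℝ)|) := by
              linarith [abs_sub_le (x m₁ i) (x m₂ i) (w * (m₂ i : ℝ))]
          _ = _ := by ring
      have t1' : |w * (m₁ i : ℝ) - x m₁ i| ≤ w / 2 := by rwa [abs_sub_comm]
      have hdd : w + w < dist (x m₁) (x m₂) := by linarith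
      exact Metric.closedBall_disjoint_closedBall hdd
    have hcount : (Tv.card : ℝ≥0∞) * ENNReal.ofReal (c₁ * w ^ d) ≤ μ Set.univ := by
      calc (Tv.card : ℝ≥0∞) * ENNReal.ofReal (c₁ * w ^ d)
          = Tv.card • ENNReal.ofReal (c₁ * w ^ d) := by rw [nsmul_eq_mul]
        _ ≤ ∑ m ∈ Tv, μ (Metric.closedBall (x m) w) :=
            Finset.card_nsmul_le_sum _ _ _ (fun m hm => hlow (x m) (hx2 m (hmemS m hm)))
        _ = μ (⋃ m ∈ Tv, Metric.closedBall (x m) w) :=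
            (measure_biUnion_finset hdisj fun m _ => measurableSet_closedBall).symm
        _ ≤ μ Set.univ := measure_mono (Set.subset_univ _)
    have h2 : ENNReal.ofReal ((Tv.card : ℝ) * (c₁ * w ^ d)) ≤ μ Set.univ := by
      rw [ENNReal.ofReal_mul (by positivity), ENNReal.ofReal_natCast]
      exact hcount
    exact (ENNReal.ofReal_le_iff_le_toReal hμfin.ne).mp h2
  have hcard : Sf.card = ∑ v : Fin n → ZMod 4,
      (Sf.filter (fun m => (fun i => ((m i : ℤ) : ZMod 4)) = v)).card :=
    Finset.card_eq_sum_card_fiberwise (fun m _ => Finset.mem_univ _)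
  have hSn : {m : Fin n → ℤ | (dyadicCube n j m ∩ K).Nonempty}.ncard = Sf.card := by
    rw [← Set.Finite.coe_toFinset hfin, Set.ncard_coe_finset]
  rw [hSn, hcard]
  push_cast
  rw [Finset.sum_mul]
  calc ∑ v : Fin n → ZMod 4,
        ((Sf.filter (fun m => (fun i => ((m i : ℤ) : ZMod 4)) = v)).card : ℝ) * (c₁ * w ^ d)
      ≤ ∑ _v : Fin n → ZMod 4, (μ Set.univ).toReal := Finset.sum_le_sum (fun v _ => key v)
    _ = (Fintype.card (Fin n → ZMod 4) : ℝ) * (μ Set.univ).toReal := by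
        rw [Finset.sum_const, Finset.card_univ, nsmul_eq_mul]
    _ = 4 ^ n * (μ Set.univ).toReal := by
        rw [Fintype.card_fun]
        simp [ZMod.card]

lemma graph_mem_iff {n : ℕ} {K : Set (EuclideanSpace ℝ (Fin n))}
    {f : EuclideanSpace ℝ (Fin n) → ℝ} {p : EuclideanSpace ℝ (Fin (n+1))} :
    p ∈ graphOn K f ↔ ∃ x ∈ K, (∀ i : Fin n, p i.castSucc = x i) ∧ p (Fin.last n) = f x := by
  constructor
  · rintro ⟨x, hx, rfl⟩
    refine ⟨x, hx, fun i => ?_, ?_⟩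
    · show (Fin.snoc (x : Fin n → ℝ) (f x) : Fin (n+1) → ℝ) i.castSucc = x i
      simp [Fin.snoc_castSucc]
    · show (Fin.snoc (x : Fin n → ℝ) (f x) : Fin (n+1) → ℝ) (Fin.last n) = f x
      simp [Fin.snoc_last]
  · rintro ⟨x, hx, hcs, hl⟩
    refine ⟨x, hx, ?_⟩
    have : ∀ i : Fin (n+1),
        ((EuclideanSpace.equiv (Fin (n + 1)) ℝ).symm
          (Fin.snoc (EuclideanSpace.equiv (Fin n) ℝ x) (f x))) i = p i := by
      intro i
      refine Fin.lastCases ?_ ?_ i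
      · show (Fin.snoc (x : Fin n → ℝ) (f x) : Fin (n+1) → ℝ) (Fin.last n) = p (Fin.last n)
        simp [hl.symm]
      · intro i
        show (Fin.snoc (x : Fin n → ℝ) (f x) : Fin (n+1) → ℝ) i.castSucc = p i.castSucc
        simp [hcs i]
    exact PiLp.ext this

lemma boxCount_graph_le {n j : ℕ} {s c : ℝ} (hs0 : 0 < s) (hc : 0 < c)
    {K : Set (EuclideanSpace ℝ (Fin n))} {f : EuclideanSpace ℝ (Fin n) → ℝ}
    (hHold : ∀ x ∈ K, ∀ y ∈ K, |f x - f y| ≤ c * dist x y ^ s)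
    (hSfin : {m : Fin n → ℤ | (dyadicCube n j m ∩ K).Nonempty}.Finite)
    (hTfin : {m : Fin (n+1) → ℤ | (dyadicCube (n+1) j m ∩ graphOn K f).Nonempty}.Finite) :
    (boxCount (graphOn K f) j : ℝ)
      ≤ ({m : Fin n → ℤ | (dyadicCube n j m ∩ K).Nonempty}.ncard : ℝ)
        * (2 * (((2:ℝ) ^ (-(j:ℤ)))⁻¹ * (c * (Real.sqrt n * (2:ℝ) ^ (-(j:ℤ))) ^ s)) + 5) := by
  classical
  set w : ℝ := (2:ℝ) ^ (-(j:ℤ)) with hw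
  have hw0 : 0 < w := by positivity
  set l : ℝ := w⁻¹ * (c * (Real.sqrt n * w) ^ s) with hl
  have hl0 : 0 ≤ l := by positivity
  set L : ℤ := ⌈l⌉ + 1 with hL
  have hlL : l + 1 ≤ (L : ℝ) := by
    rw [hL]
    push_cast
    linarith [Int.le_ceil l]
  have hLl : (L : ℝ) ≤ l + 2 := by
    rw [hL]
    push_cast
    linarith [Int.ceil_lt_add_one l]
  have hL1 : 1 ≤ L := by
    have : (0:ℤ) ≤ ⌈l⌉ := Int.ceil_nonneg hl0
    omega
  set Tf := hTfin.toFinset with hTf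
  set Sf := hSfin.toFinset with hSf
  set pr : (Fin (n+1) → ℤ) → (Fin n → ℤ) × ℤ :=
    fun m => (fun i => m i.castSucc, m (Fin.last n)) with hpr
  have hprinj : Function.Injective pr := by
    intro a b hab
    have h1 := congrArg Prod.fst hab
    have h2 := congrArg Prod.snd hab
    simp only [hpr] at h1 h2
    funext i
    refine Fin.lastCases ?_ (fun i => ?_) i
    · exact h2
    · exact congrFun h1 i
  have hTmem : ∀ m ∈ Tf, ∃ x, x ∈ K ∧ (∀ i : Fin n, |x i - w * ((m i.castSucc : ℤ) : ℝ)| ≤ w/2)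
      ∧ |f x - w * ((m (Fin.last n) : ℤ) : ℝ)| ≤ w/2 := by
    intro m hm
    rw [hTf, Set.Finite.mem_toFinset] at hm
    obtain ⟨p, hp1, hp2⟩ := hm
    obtain ⟨x, hxK, hcs, hlast⟩ := graph_mem_iff.mp hp2
    refine ⟨x, hxK, fun i => ?_, ?_⟩
    · have := hp1 i.castSucc; rwa [hcs i] at this
    · have := hp1 (Fin.last n); rwa [hlast] at this
  choose! xw hxwK hxw1 hxw2 using hTmem
  have hTcard : Tf.card = (Tf.image pr).card := (Finset.card_image_of_injective Tf hprinj).symm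
  have hfst : ∀ p ∈ Tf.image pr, p.1 ∈ Sf := by
    intro p hp
    obtain ⟨m, hm, rfl⟩ := Finset.mem_image.mp hp
    rw [hSf, Set.Finite.mem_toFinset]
    exact ⟨xw m, fun i => hxw1 m hm i, hxwK m hm⟩
  have himgcard : (Tf.image pr).card
      = ∑ m ∈ Sf, ((Tf.image pr).filter (fun p => p.1 = m)).card :=
    Finset.card_eq_sum_card_fiberwise hfst
  have hfib : ∀ m ∈ Sf, ((Tf.image pr).filter (fun p => p.1 = m)).card ≤ (2*L+1).toNat := by
    intro m hm
    set F := (Tf.image pr).filter (fun p => p.1 = m) with hF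
    rcases F.eq_empty_or_nonempty with hFe | ⟨p₀, hp₀⟩
    · simp [hFe]
    · have hsndinj : Set.InjOn Prod.snd (F : Set ((Fin n → ℤ) × ℤ)) := by
        intro p hp q hq hpq
        have h1 : p.1 = m := (Finset.mem_filter.mp (Finset.mem_coe.mp hp)).2
        have h2 : q.1 = m := (Finset.mem_filter.mp (Finset.mem_coe.mp hq)).2
        exact Prod.ext (h1.trans h2.symm) hpq
      have hcard2 : F.card = (F.image Prod.snd).card :=
        (Finset.card_image_of_injOn hsndinj).symm
      -- key estimate for members of the fiber
      have hkey : ∀ p ∈ F, |((p.2 : ℤ) : ℝ) - ((p₀.2 : ℤ) : ℝ)| ≤ l + 1 := by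
        intro p hpF
        obtain ⟨hpI, hp1⟩ := Finset.mem_filter.mp hpF
        obtain ⟨hp₀I, hp₀1⟩ := Finset.mem_filter.mp hp₀
        obtain ⟨m', hm', hm'p⟩ := Finset.mem_image.mp hpI
        obtain ⟨m₀, hm₀, hm₀p⟩ := Finset.mem_image.mp hp₀I
        set x := xw m' with hx
        set y := xw m₀ with hy
        have hm'cs : ∀ i : Fin n, (m' i.castSucc : ℤ) = m i := by
          intro i
          have : (pr m').1 = m := by rw [hm'p]; exact hp1
          exact congrFun this i
        have hm₀cs : ∀ i : Fin n, (m₀ i.castSucc : ℤ) = m i := by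
          intro i
          have : (pr m₀).1 = m := by rw [hm₀p]; exact hp₀1
          exact congrFun this i
        have hm'l : m' (Fin.last n) = p.2 := by
          have : (pr m').2 = p.2 := by rw [hm'p]
          exact this
        have hm₀l : m₀ (Fin.last n) = p₀.2 := by
          have : (pr m₀).2 = p₀.2 := by rw [hm₀p]
          exact this
        have hxi : ∀ i : Fin n, |x i - w * ((m i : ℤ) : ℝ)| ≤ w/2 := by
          intro i
          have := hxw1 m' hm' i
          rwa [hm'cs i] at this
        have hyi : ∀ i : Fin n, |y i - w * ((m i : ℤ) : ℝ)| ≤ w/2 := by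
          intro i
          have := hxw1 m₀ hm₀ i
          rwa [hm₀cs i] at this
        have hdistxy : dist x y ≤ Real.sqrt n * w := by
          apply dist_le_of_coord (le_of_lt hw0)
          intro i
          have t1 := hxi i
          have t2 := hyi i
          have := abs_sub_le (x i) (w * ((m i : ℤ) : ℝ)) (y i)
          rw [abs_sub_comm (w * ((m i : ℤ) : ℝ)) (y i)] at this
          linarith
        have hosc : |f x - f y| ≤ c * (Real.sqrt n * w) ^ s := by
          calc |f x - f y| ≤ c * dist x y ^ s := hHold x (hxwK m' hm') y (hxwK m₀ hm₀)
            _ ≤ c * (Real.sqrt n * w) ^ s := by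
                apply mul_le_mul_of_nonneg_left _ (le_of_lt hc)
                exact Real.rpow_le_rpow dist_nonneg hdistxy (le_of_lt hs0)
        have hfx : |f x - w * ((p.2 : ℤ) : ℝ)| ≤ w/2 := by
          have := hxw2 m' hm'
          rwa [hm'l] at this
        have hfy : |f y - w * ((p₀.2 : ℤ) : ℝ)| ≤ w/2 := by
          have := hxw2 m₀ hm₀
          rwa [hm₀l] at this
        have hwpq : |w * ((p.2 : ℤ) : ℝ) - w * ((p₀.2 : ℤ) : ℝ)|
            ≤ c * (Real.sqrt n * w) ^ s + w := by
          have t1 := abs_sub_le (w * ((p.2 : ℤ) : ℝ)) (f x) (w * ((p₀.2 : ℤ) : ℝ))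
          have t2 := abs_sub_le (f x) (f y) (w * ((p₀.2 : ℤ) : ℝ))
          rw [abs_sub_comm (w * ((p.2 : ℤ) : ℝ)) (f x)] at t1
          linarith
        rw [← mul_sub, abs_mul, abs_of_pos hw0] at hwpq
        rw [hl]
        rw [← le_div_iff₀' hw0] at hwpq
        have : w⁻¹ * (c * (Real.sqrt n * w) ^ s + w) = w⁻¹ * (c * (Real.sqrt n * w) ^ s) + 1 := by
          field_simp
        calc |((p.2 : ℤ) : ℝ) - ((p₀.2 : ℤ) : ℝ)| ≤ (c * (Real.sqrt n * w) ^ s + w) / w := hwpq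
          _ = w⁻¹ * (c * (Real.sqrt n * w) ^ s) + 1 := by
              rw [div_eq_inv_mul]; rw [this]
          _ ≤ _ := le_refl _
      have hsub : F.image Prod.snd ⊆ Finset.Icc (p₀.2 - L) (p₀.2 + L) := by
        intro k hk
        obtain ⟨p, hpF, rfl⟩ := Finset.mem_image.mp hk
        have h1 : |((p.2 : ℤ) : ℝ) - ((p₀.2 : ℤ) : ℝ)| ≤ (L : ℝ) := (hkey p hpF).trans hlL
        have h2 : |p.2 - p₀.2| ≤ L := by
          have h3 : ((|p.2 - p₀.2| : ℤ) : ℝ) ≤ (L : ℝ) := by rwa [Int.cast_abs, Int.cast_sub]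
          exact_mod_cast h3
        obtain ⟨ha, hb⟩ := abs_le.mp h2
        rw [Finset.mem_Icc]
        omega
      calc F.card = (F.image Prod.snd).card := hcard2
        _ ≤ (Finset.Icc (p₀.2 - L) (p₀.2 + L)).card := Finset.card_le_card hsub
        _ = (2*L+1).toNat := by
            rw [Int.card_Icc]
            congr 1
            ring
  have hmain : Tf.card ≤ Sf.card * (2*L+1).toNat := by
    rw [hTcard, himgcard]
    calc ∑ m ∈ Sf, ((Tf.image pr).filter (fun p => p.1 = m)).card
        ≤ ∑ _m ∈ Sf, (2*L+1).toNat := Finset.sum_le_sum hfib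
      _ = Sf.card * (2*L+1).toNat := by rw [Finset.sum_const, smul_eq_mul]
  have hbc : boxCount (graphOn K f) j = Tf.card := by
    rw [boxCount, ← Set.ncard_coe_finset Tf, hTf, Set.Finite.coe_toFinset]
  have hSc : {m : Fin n → ℤ | (dyadicCube n j m ∩ K).Nonempty}.ncard = Sf.card := by
    rw [← Set.ncard_coe_finset Sf, hSf, Set.Finite.coe_toFinset]
  have h2L : (((2*L+1).toNat : ℕ) : ℝ) ≤ 2*l+5 := by
    have hnn : (0:ℤ) ≤ 2*L+1 := by omega
    have h4 : (((2*L+1).toNat : ℕ) : ℝ) = ((2*L+1 : ℤ) : ℝ) := by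
      rw [show (((2*L+1).toNat : ℕ) : ℝ) = (((2*L+1).toNat : ℤ) : ℝ) by push_cast; ring,
        Int.toNat_of_nonneg hnn]
    rw [h4]
    push_cast
    linarith
  rw [hbc, hSc]
  calc (Tf.card : ℝ) ≤ (Sf.card : ℝ) * (((2*L+1).toNat : ℕ) : ℝ) := by exact_mod_cast hmain
    _ ≤ (Sf.card : ℝ) * (2*l+5) :=
        mul_le_mul_of_nonneg_left h2L (Nat.cast_nonneg _)

set_option maxHeartbeats 1000000 in
/-- If `0 < s ≤ 1`, `K` is a `d`-set in `ℝⁿ` with `0 < d ≤ n`, and `f` is Hölder continuous of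
exponent `s` on `K`, then the upper box counting dimension of `Γ(f)` is at most `d + 1 - s`. -/
theorem upperBoxDim_graph_le_of_holder {n : ℕ} (s : ℝ) (hs0 : 0 < s) (hs1 : s ≤ 1)
    (d : ℝ) (hd0 : 0 < d) (hdn : d ≤ n)
    (μ : Measure (EuclideanSpace ℝ (Fin n))) (K : Set (EuclideanSpace ℝ (Fin n)))
    (hK : IsDSet d μ K) (f : EuclideanSpace ℝ (Fin n) → ℝ)
    (hf : ∃ c : ℝ, 0 < c ∧ ∀ x ∈ K, ∀ y ∈ K, |f x - f y| ≤ c * dist x y ^ s) :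
    upperBoxDim (graphOn K f) ≤ d + 1 - s := by
  classical
  obtain ⟨hKcomp, hμKc, hKmin, hμpos, hμfin, c₁, c₂, hc₁, hc₂, hball⟩ := hK
  obtain ⟨c, hc, hHold⟩ := hf
  have hKbdd : Bornology.IsBounded K := hKcomp.isBounded
  set t : ℝ := d + 1 - s with htdef
  have ht0 : 0 < t := by rw [htdef]; linarith
  -- the graph is bounded
  have hGbdd : Bornology.IsBounded (graphOn K f) := by
    rcases K.eq_empty_or_nonempty with hKe | ⟨x₀, hx₀⟩
    · have hGe : graphOn K f = ∅ := by
        rw [_root_.graphOn, hKe, Set.image_empty]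
      rw [hGe]
      exact Bornology.isBounded_empty
    · obtain ⟨R, hRK⟩ := hKbdd.subset_closedBall 0
      set R' : ℝ := max R 1 with hR'
      have hR'0 : (0:ℝ) < R' := lt_of_lt_of_le one_pos (le_max_right _ _)
      have hRK' : K ⊆ Metric.closedBall 0 R' :=
        hRK.trans (Metric.closedBall_subset_closedBall (le_max_left _ _))
      set M : ℝ := |f x₀| + c * (2*R') ^ s + R' with hM
      have hM0 : 0 ≤ M := by positivity
      have hsub : graphOn K f ⊆ Metric.closedBall 0 (Real.sqrt ((n+1 : ℕ) : ℝ) * M) := by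
        intro p hp
        obtain ⟨x, hxK, hcs, hlast⟩ := graph_mem_iff.mp hp
        have hxR : ∀ i : Fin n, |x i| ≤ R' := by
          intro i
          have h1 := coord_abs_le_dist x 0 i
          have h0 : (0 : EuclideanSpace ℝ (Fin n)) i = 0 := rfl
          rw [h0, sub_zero] at h1
          exact h1.trans (mem_closedBall.mp (hRK' hxK))
        have hfb : |f x| ≤ |f x₀| + c * (2*R') ^ s := by
          have h1 := hHold x hxK x₀ hx₀
          have hd2 : dist x x₀ ≤ 2*R' := by
            have h2 := dist_triangle x (0 : EuclideanSpace ℝ (Fin n)) x₀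
            have h3 : dist x 0 ≤ R' := mem_closedBall.mp (hRK' hxK)
            have h4 : dist (0 : EuclideanSpace ℝ (Fin n)) x₀ ≤ R' := by
              rw [dist_comm]; exact mem_closedBall.mp (hRK' hx₀)
            linarith
          have h5 : c * dist x x₀ ^ s ≤ c * (2*R') ^ s :=
            mul_le_mul_of_nonneg_left (Real.rpow_le_rpow dist_nonneg hd2 hs0.le) hc.le
          have h6 := abs_sub_abs_le_abs_sub (f x) (f x₀)
          linarith
        have hcoord : ∀ i : Fin (n+1), |p i - (0 : EuclideanSpace ℝ (Fin (n+1))) i| ≤ M := by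
          intro i
          have h0 : (0 : EuclideanSpace ℝ (Fin (n+1))) i = 0 := rfl
          rw [h0, sub_zero]
          refine Fin.lastCases ?_ (fun i => ?_) i
          · rw [hlast, hM]
            linarith
          · rw [hcs i]
            have := hxR i
            have h7 : 0 ≤ |f x₀| + c * (2*R') ^ s := by positivity
            rw [hM]
            linarith
        have := dist_le_of_coord hM0 hcoord
        exact mem_closedBall.mpr this
      exact (Metric.isBounded_closedBall).subset hsub
  -- constants
  set A₁ : ℝ := 4^n * (μ Set.univ).toReal / c₁ with hA₁
  have hA₁0 : 0 ≤ A₁ := by positivity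
  set A₂ : ℝ := 2 * (c * Real.sqrt n ^ s) + 5 with hA₂
  have hA₂0 : 0 ≤ A₂ := by positivity
  set A : ℝ := max (A₁ * A₂) 1 with hA
  have hA1 : 1 ≤ A := le_max_right _ _
  have hA0 : 0 < A := lt_of_lt_of_le one_pos hA1
  -- the per-scale counting estimate
  have hbc : ∀ j : ℕ, (boxCount (graphOn K f) j : ℝ) ≤ A * 2 ^ ((j:ℝ) * t) := by
    intro j
    set w : ℝ := (2:ℝ) ^ (-(j:ℤ)) with hw
    have hw0 : 0 < w := by positivity
    have hw1 : w ≤ 1 := by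
      rw [hw]
      apply zpow_le_one_of_nonpos₀ (by norm_num : (1:ℝ) ≤ 2)
      simp
    have hwr : w = (2:ℝ) ^ (-(j:ℝ)) := by
      rw [hw, ← Real.rpow_intCast 2 (-(j:ℤ))]
      norm_num
    have hSfin := finite_boxSet (j := j) hKbdd
    have hTfin := finite_boxSet (j := j) hGbdd
    have hlow : ∀ x ∈ K, ENNReal.ofReal (c₁ * w ^ d) ≤ μ (Metric.closedBall x w) :=
      fun x hx => (hball w ⟨hw0, hw1⟩ x hx).1
    have h1 := card_boxSet_of_measure hμfin hlow hSfin
    have h2 := boxCount_graph_le hs0 hc hHold hSfin hTfin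
    have hwdpos : (0:ℝ) < c₁ * w ^ d := by positivity
    have hwdne : w ^ d ≠ 0 := by positivity
    -- bound on the number of cubes meeting K
    have hinv : (w ^ d)⁻¹ = (2:ℝ) ^ ((j:ℝ) * d) := by
      rw [hwr, ← Real.rpow_mul (by norm_num : (0:ℝ) ≤ 2),
        ← Real.rpow_neg (by norm_num : (0:ℝ) ≤ 2)]
      congr 1
      ring
    have h3 : ({m : Fin n → ℤ | (dyadicCube n j m ∩ K).Nonempty}.ncard : ℝ)
        ≤ A₁ * 2 ^ ((j:ℝ) * d) := by
      rw [← le_div_iff₀ hwdpos] at h1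
      refine h1.trans (le_of_eq ?_)
      rw [hA₁, ← hinv]
      field_simp
    -- bound on the fiber size factor
    have hws : w⁻¹ * w ^ s = (2:ℝ) ^ ((j:ℝ) * (1 - s)) := by
      rw [hwr, ← Real.rpow_mul (by norm_num : (0:ℝ) ≤ 2),
        ← Real.rpow_neg (by norm_num : (0:ℝ) ≤ 2),
        ← Real.rpow_add (by norm_num : (0:ℝ) < 2)]
      congr 1
      ring
    have hone : (1:ℝ) ≤ (2:ℝ) ^ ((j:ℝ) * (1 - s)) := by
      apply Real.one_le_rpow (by norm_num : (1:ℝ) ≤ 2)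
      have : (0:ℝ) ≤ (j:ℝ) := Nat.cast_nonneg j
      nlinarith
    have h4 : 2 * (w⁻¹ * (c * (Real.sqrt n * w) ^ s)) + 5
        ≤ A₂ * 2 ^ ((j:ℝ) * (1 - s)) := by
      have hsplit : (Real.sqrt n * w) ^ s = Real.sqrt n ^ s * w ^ s :=
        Real.mul_rpow (Real.sqrt_nonneg _) hw0.le
      have he : w⁻¹ * (c * (Real.sqrt n * w) ^ s)
          = (c * Real.sqrt n ^ s) * (2:ℝ) ^ ((j:ℝ) * (1 - s)) := by
        rw [hsplit, ← hws]
        ring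
      rw [he, hA₂]
      have hcs0 : 0 ≤ c * Real.sqrt n ^ s := by positivity
      nlinarith
    -- combine
    have h5 : (boxCount (graphOn K f) j : ℝ)
        ≤ (A₁ * 2 ^ ((j:ℝ) * d)) * (A₂ * 2 ^ ((j:ℝ) * (1 - s))) := by
      refine h2.trans ?_
      have hr0 : (0:ℝ) ≤ 2 * (w⁻¹ * (c * (Real.sqrt n * w) ^ s)) + 5 := by positivity
      have hn0 : (0:ℝ) ≤ ({m : Fin n → ℤ | (dyadicCube n j m ∩ K).Nonempty}.ncard : ℝ) :=
        Nat.cast_nonneg _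
      exact mul_le_mul h3 h4 hr0 (by positivity)
    refine h5.trans ?_
    have h6 : (A₁ * 2 ^ ((j:ℝ) * d)) * (A₂ * 2 ^ ((j:ℝ) * (1 - s)))
        = (A₁ * A₂) * 2 ^ ((j:ℝ) * t) := by
      calc (A₁ * 2 ^ ((j:ℝ) * d)) * (A₂ * 2 ^ ((j:ℝ) * (1 - s)))
          = (A₁ * A₂) * ((2:ℝ) ^ ((j:ℝ) * d) * (2:ℝ) ^ ((j:ℝ) * (1 - s))) := by ring
        _ = (A₁ * A₂) * 2 ^ ((j:ℝ) * t) := by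
            rw [← Real.rpow_add (by norm_num : (0:ℝ) < 2)]
            rw [show (j:ℝ) * d + (j:ℝ) * (1 - s) = (j:ℝ) * t by rw [htdef]; ring]
    rw [h6]
    have h7 : (0:ℝ) ≤ (2:ℝ) ^ ((j:ℝ) * t) := by positivity
    exact mul_le_mul_of_nonneg_right (le_max_left _ _) h7
  -- the limsup argument
  rw [upperBoxDim]
  have h0le : ∀ j : ℕ, 0 ≤ Real.logb 2 (boxCount (graphOn K f) j) / j := by
    intro j
    apply div_nonneg _ (Nat.cast_nonneg j)
    rcases Nat.eq_zero_or_pos (boxCount (graphOn K f) j) with h0 | hpos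
    · rw [h0]; simp
    · exact Real.logb_nonneg one_lt_two (by exact_mod_cast hpos)
  have hle : (fun j : ℕ => Real.logb 2 (boxCount (graphOn K f) j) / j)
      ≤ᶠ[Filter.atTop] (fun j : ℕ => Real.logb 2 A / j + t) := by
    filter_upwards [Filter.eventually_ge_atTop 1] with j hj
    have hj0 : (0:ℝ) < j := by exact_mod_cast hj
    have hlog : Real.logb 2 (boxCount (graphOn K f) j) ≤ Real.logb 2 A + (j:ℝ) * t := by
      rcases Nat.eq_zero_or_pos (boxCount (graphOn K f) j) with h0 | hpos
      · rw [h0]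
        simp only [Nat.cast_zero, Real.logb_zero]
        have ha : 0 ≤ Real.logb 2 A := Real.logb_nonneg one_lt_two hA1
        have hb : 0 ≤ (j:ℝ) * t := by positivity
        linarith
      · have hbp : (0:ℝ) < (boxCount (graphOn K f) j : ℝ) := by exact_mod_cast hpos
        calc Real.logb 2 (boxCount (graphOn K f) j)
            ≤ Real.logb 2 (A * 2 ^ ((j:ℝ) * t)) :=
              Real.logb_le_logb_of_le one_lt_two hbp (hbc j)
          _ = Real.logb 2 A + Real.logb 2 ((2:ℝ) ^ ((j:ℝ) * t)) :=
              Real.logb_mul (ne_of_gt hA0) (by positivity)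
          _ = Real.logb 2 A + (j:ℝ) * t := by
              rw [Real.logb_rpow (by norm_num : (0:ℝ) < 2) (by norm_num : (2:ℝ) ≠ 1)]
    calc Real.logb 2 (boxCount (graphOn K f) j) / j
        ≤ (Real.logb 2 A + (j:ℝ) * t) / j := by
          gcongr
      _ = Real.logb 2 A / j + t := by field_simp
  have hv : Filter.Tendsto (fun j : ℕ => Real.logb 2 A / j + t) Filter.atTop (nhds t) := by
    have h8 := (tendsto_const_div_atTop_nhds_zero_nat (Real.logb 2 A)).add
      (tendsto_const_nhds (x := t) (f := (Filter.atTop : Filter ℕ)))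
    rwa [zero_add] at h8
  calc Filter.limsup (fun j : ℕ => Real.logb 2 (boxCount (graphOn K f) j) / j) Filter.atTop
      ≤ Filter.limsup (fun j : ℕ => Real.logb 2 A / j + t) Filter.atTop :=
        Filter.limsup_le_limsup hle
          (Filter.isCoboundedUnder_le_of_le Filter.atTop h0le)
          (hv.isBoundedUnder_le)
    _ = t := hv.limsup_eq

end
end

section
/- Let 0 < s ≤ 1 and let K be a d-set in ℝⁿ with 0 < d ≤ n. If f : K → ℝ is Hölder continuous of exponent s, then the upper box counting dimension of the graph Γ(f) ⊆ ℝ^{n+1} satisfies ͞dim_B Γ(f) ≤ d/s. -/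
open MeasureTheory Metric Set

noncomputable section

/-! ### Auxiliary lemmas -/

namespace BoxAux

open ENNReal NNReal Filter

lemma rho_pos (j : ℕ) : (0:ℝ) < (2 : ℝ) ^ (-(j:ℤ)) := by positivity

lemma rho_mul_pow (j : ℕ) : (2:ℝ) ^ (-(j:ℤ)) * 2 ^ (j:ℕ) = 1 := by
  rw [zpow_neg, zpow_natCast]
  exact inv_mul_cancel₀ (by positivity)

lemma rho_le_one (j : ℕ) : (2:ℝ) ^ (-(j:ℤ)) ≤ 1 := by
  rw [zpow_neg, zpow_natCast]
  rw [inv_le_one_iff₀]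
  right; exact one_le_pow₀ (by norm_num)

lemma rho_rpow (j : ℕ) (d : ℝ) : ((2:ℝ) ^ (-(j:ℤ))) ^ d = (2:ℝ) ^ (-(j:ℝ) * d) := by
  rw [show ((2:ℝ) ^ (-(j:ℤ))) = (2:ℝ) ^ ((-(j:ℤ) : ℤ) : ℝ) from (Real.rpow_intCast 2 _).symm,
    ← Real.rpow_mul (by norm_num)]
  push_cast
  ring_nf

lemma coord_le_dist {N : ℕ} (x y : EuclideanSpace ℝ (Fin N)) (i : Fin N) :
    |x i - y i| ≤ dist x y := by
  calc |x i - y i| = √(dist (x i) (y i) ^ 2) := by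
        rw [Real.sqrt_sq dist_nonneg, Real.dist_eq]
    _ ≤ √(∑ k, dist (x k) (y k) ^ 2) :=
        Real.sqrt_le_sqrt (Finset.single_le_sum (f := fun k => dist (x k) (y k) ^ 2)
          (fun k _ => sq_nonneg _) (Finset.mem_univ i))
    _ = dist x y := (EuclideanSpace.dist_eq x y).symm

lemma dist_le_of_coord {N : ℕ} {x y : EuclideanSpace ℝ (Fin N)} {r : ℝ} (hr : 0 ≤ r)
    (h : ∀ i, |x i - y i| ≤ r) : dist x y ≤ Real.sqrt N * r := by
  rw [EuclideanSpace.dist_eq]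
  calc √(∑ i, dist (x i) (y i) ^ 2) ≤ √(∑ _i : Fin N, r ^ 2) := by
        apply Real.sqrt_le_sqrt
        apply Finset.sum_le_sum
        intro i _
        rw [Real.dist_eq]
        exact pow_le_pow_left₀ (abs_nonneg _) (h i) 2
    _ = √((N:ℝ) * r ^ 2) := by rw [Finset.sum_const, Finset.card_univ]; simp [nsmul_eq_mul]
    _ = √(N:ℝ) * r := by rw [Real.sqrt_mul (by positivity), Real.sqrt_sq hr]

lemma mem_dyadicCube_round {N j : ℕ} (x : EuclideanSpace ℝ (Fin N)) :
    x ∈ dyadicCube N j (fun i => round ((2:ℝ) ^ (j:ℕ) * x i)) := by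
  intro i
  have h1 : x i - (2:ℝ) ^ (-(j:ℤ)) * (round ((2:ℝ) ^ (j:ℕ) * x i) : ℝ)
      = (2:ℝ) ^ (-(j:ℤ)) * ((2:ℝ) ^ (j:ℕ) * x i - (round ((2:ℝ) ^ (j:ℕ) * x i) : ℝ)) := by
    have := rho_mul_pow j
    field_simp
    linear_combination (-(x i)) * this
  rw [h1, abs_mul, abs_of_pos (rho_pos j)]
  have := abs_sub_round ((2:ℝ) ^ (j:ℕ) * x i)
  nlinarith [rho_pos j]

lemma card_close_le {N : ℕ} (A : ℕ) (t : Fin N → ℝ) (S : Finset (Fin N → ℤ))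
    (h : ∀ m ∈ S, ∀ i, |(m i : ℝ) - t i| ≤ (A : ℝ) + 1/2) :
    S.card ≤ (2*A+2) ^ N := by
  classical
  set a : Fin N → ℤ := fun i => ⌈t i - ((A:ℝ) + 1/2)⌉ with ha
  set b : Fin N → ℤ := fun i => ⌊t i + ((A:ℝ) + 1/2)⌋ with hb
  have hsub : S ⊆ Fintype.piFinset (fun i => Finset.Icc (a i) (b i)) := by
    intro m hm
    rw [Fintype.mem_piFinset]
    intro i
    rw [Finset.mem_Icc]
    have h2 := h m hm i
    rw [abs_le] at h2
    exact ⟨Int.ceil_le.2 (by linarith [h2.1]), Int.le_floor.2 (by linarith [h2.2])⟩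
  calc S.card ≤ _ := Finset.card_le_card hsub
    _ = ∏ i, (Finset.Icc (a i) (b i)).card := Fintype.card_piFinset _
    _ ≤ ∏ _i : Fin N, (2*A+2) := by
        apply Finset.prod_le_prod'
        intro i _
        rw [Int.card_Icc]
        rw [Int.toNat_le]
        have h3 : (b i : ℝ) ≤ t i + ((A:ℝ) + 1/2) := Int.floor_le _
        have h4 : t i - ((A:ℝ) + 1/2) ≤ (a i : ℝ) := Int.le_ceil _
        have h5r : (b i : ℝ) - (a i : ℝ) ≤ 2*(A:ℝ) + 1 := by linarith
        have h5 : b i - a i ≤ 2*(A:ℤ) + 1 := by exact_mod_cast h5r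
        push_cast
        omega
    _ = (2*A+2) ^ N := by simp

lemma finite_cubeSet {N j : ℕ} {E : Set (EuclideanSpace ℝ (Fin N))} {R : ℝ}
    (hE : ∀ x ∈ E, ∀ i, |x i| ≤ R) :
    {m : Fin N → ℤ | (dyadicCube N j m ∩ E).Nonempty}.Finite := by
  set M : ℤ := ⌈(2:ℝ) ^ (j:ℕ) * R + 1⌉ with hM
  apply Set.Finite.subset (Set.Finite.pi (fun i : Fin N => Set.finite_Icc (-M) M))
  intro m hm
  obtain ⟨x, hx1, hx2⟩ := hm
  intro i _
  have h1 := hx1 i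
  have h2 := hE x hx2 i
  simp only [Set.mem_Icc]
  have hr := rho_pos j
  have hmp := rho_mul_pow j
  have habs : |(m i : ℝ)| ≤ (2:ℝ) ^ (j:ℕ) * R + 1 := by
    have h3 : |(2:ℝ) ^ (-(j:ℤ)) * (m i : ℝ)| ≤ R + (2:ℝ) ^ (-(j:ℤ)) / 2 := by
      have t1 := abs_sub_abs_le_abs_sub ((2:ℝ) ^ (-(j:ℤ)) * (m i : ℝ)) (x i)
      rw [abs_sub_comm] at t1
      linarith
    rw [abs_mul, abs_of_pos hr] at h3
    have h4 : (2:ℝ) ^ (-(j:ℤ)) ≤ 1 := rho_le_one j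
    have h5 : (0:ℝ) < (2:ℝ) ^ (j:ℕ) := by positivity
    have h6 := mul_le_mul_of_nonneg_left h3 (le_of_lt h5)
    have h7 : (2:ℝ) ^ (j:ℕ) * ((2:ℝ) ^ (-(j:ℤ)) * |(m i : ℝ)|) = |(m i : ℝ)| := by
      rw [← mul_assoc, mul_comm ((2:ℝ) ^ (j:ℕ)), hmp, one_mul]
    have h8 : (2:ℝ) ^ (j:ℕ) * ((2:ℝ) ^ (-(j:ℤ)) / 2) = 1/2 := by
      rw [← mul_div_assoc, mul_comm ((2:ℝ) ^ (j:ℕ)), hmp]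
    nlinarith
  constructor
  · have : -(M:ℝ) ≤ (m i : ℝ) := by
      have := Int.le_ceil ((2:ℝ) ^ (j:ℕ) * R + 1)
      have := abs_le.1 habs
      push_cast
      linarith [this.1]
    exact_mod_cast this
  · have : (m i : ℝ) ≤ (M:ℝ) := by
      have := Int.le_ceil ((2:ℝ) ^ (j:ℕ) * R + 1)
      have := abs_le.1 habs
      linarith [this.2]
    exact_mod_cast this

lemma count_le_of_mass {n j : ℕ} {μ : Measure (EuclideanSpace ℝ (Fin n))}
    {K : Set (EuclideanSpace ℝ (Fin n))}
    (hfin : {m : Fin n → ℤ | (dyadicCube n j m ∩ K).Nonempty}.Finite)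
    {c₁ d : ℝ}
    (hmass : ∀ x ∈ K, ENNReal.ofReal (c₁ * ((2:ℝ) ^ (-(j:ℤ))) ^ d)
      ≤ μ (closedBall x ((2:ℝ) ^ (-(j:ℤ))))) :
    (hfin.toFinset.card : ℝ≥0∞) * ENNReal.ofReal (c₁ * ((2:ℝ) ^ (-(j:ℤ))) ^ d)
      ≤ 4 ^ n * μ Set.univ := by
  classical
  set ρ : ℝ := (2:ℝ) ^ (-(j:ℤ)) with hρ
  set F := hfin.toFinset with hF
  set x : (Fin n → ℤ) → EuclideanSpace ℝ (Fin n) :=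
    fun m => if h : (dyadicCube n j m ∩ K).Nonempty then h.some else 0 with hxdef
  have hx : ∀ m ∈ F, x m ∈ dyadicCube n j m ∩ K := by
    intro m hm
    rw [hF, Set.Finite.mem_toFinset] at hm
    have hm' : (dyadicCube n j m ∩ K).Nonempty := hm
    show (if h : (dyadicCube n j m ∩ K).Nonempty then h.some else 0) ∈ _
    rw [dif_pos hm']
    exact hm'.some_mem
  set B : (Fin n → ℤ) → Set (EuclideanSpace ℝ (Fin n)) := fun m => closedBall (x m) ρ with hB
  have key : ∑ m ∈ F, μ (B m) ≤ 4 ^ n * μ Set.univ := by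
    have h1 : ∑ m ∈ F, μ (B m)
        = ∫⁻ y, (∑ m ∈ F, (B m).indicator (fun _ => (1:ℝ≥0∞)) y) ∂μ := by
      rw [lintegral_finset_sum (f := fun m => (B m).indicator (fun _ => (1:ℝ≥0∞))) F
        (fun m _ => Measurable.indicator measurable_const measurableSet_closedBall)]
      refine Finset.sum_congr rfl (fun m _ => ?_)
      rw [lintegral_indicator measurableSet_closedBall]
      simp [hB]
    rw [h1]
    have h2 : ∀ y, (∑ m ∈ F, (B m).indicator (fun _ => (1:ℝ≥0∞)) y) ≤ (4:ℝ≥0∞) ^ n := by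
      intro y
      have h3 : (∑ m ∈ F, (B m).indicator (fun _ => (1:ℝ≥0∞)) y)
          = ((F.filter (fun m => y ∈ B m)).card : ℝ≥0∞) := by
        rw [Finset.card_filter]
        push_cast
        refine Finset.sum_congr rfl (fun m _ => ?_)
        by_cases h : y ∈ B m <;> simp [Set.indicator_apply, h]
      rw [h3]
      have h4 : (F.filter (fun m => y ∈ B m)).card ≤ (2*1+2) ^ n := by
        apply card_close_le 1 (fun i => (2:ℝ) ^ (j:ℕ) * y i)
        intro m hm i
        rw [Finset.mem_filter] at hm
        have hxm := hx m hm.1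
        have hc1 : |x m i - ρ * (m i : ℝ)| ≤ ρ / 2 := hxm.1 i
        have hc2 : |y i - x m i| ≤ ρ := le_trans (coord_le_dist y (x m) i) hm.2
        have hc3 : |y i - ρ * (m i : ℝ)| ≤ 3 / 2 * ρ := by
          have := abs_sub_le (y i) (x m i) (ρ * (m i : ℝ))
          linarith
        have hmp : ρ * (2:ℝ) ^ (j:ℕ) = 1 := by rw [hρ]; exact rho_mul_pow j
        have hr := rho_pos j
        have heq : (m i : ℝ) - (2:ℝ) ^ (j:ℕ) * y i = (2:ℝ) ^ (j:ℕ) * (ρ * (m i : ℝ) - y i) := by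
          have : (2:ℝ) ^ (j:ℕ) * (ρ * (m i : ℝ)) = (m i : ℝ) := by
            rw [← mul_assoc, mul_comm ((2:ℝ) ^ (j:ℕ)), hmp, one_mul]
          nlinarith [this]
        have : |(m i : ℝ) - (2:ℝ) ^ (j:ℕ) * y i| ≤ (2:ℝ) ^ (j:ℕ) * (3/2 * ρ) := by
          rw [heq, abs_mul, abs_of_pos (by positivity : (0:ℝ) < (2:ℝ) ^ (j:ℕ))]
          rw [abs_sub_comm]
          nlinarith [hc3, (by positivity : (0:ℝ) < (2:ℝ) ^ (j:ℕ))]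
        have h2jρ : (2:ℝ) ^ (j:ℕ) * (3/2 * ρ) = 3/2 := by
          linear_combination (3/2 : ℝ) * hmp
        rw [h2jρ] at this
        push_cast
        linarith
      calc ((F.filter (fun m => y ∈ B m)).card : ℝ≥0∞) ≤ (((2*1+2) ^ n : ℕ) : ℝ≥0∞) := by
            exact_mod_cast h4
        _ = (4:ℝ≥0∞) ^ n := by norm_num
    calc ∫⁻ y, (∑ m ∈ F, (B m).indicator (fun _ => (1:ℝ≥0∞)) y) ∂μ
        ≤ ∫⁻ _y, (4:ℝ≥0∞) ^ n ∂μ := lintegral_mono (fun y => h2 y)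
      _ = 4 ^ n * μ Set.univ := by rw [lintegral_const]
  calc (F.card : ℝ≥0∞) * ENNReal.ofReal (c₁ * ρ ^ d)
      = ∑ _m ∈ F, ENNReal.ofReal (c₁ * ρ ^ d) := by
        rw [Finset.sum_const, nsmul_eq_mul]
    _ ≤ ∑ m ∈ F, μ (B m) := Finset.sum_le_sum (fun m hm => hmass (x m) (hx m hm).2)
    _ ≤ 4 ^ n * μ Set.univ := key

/-- The embedding `x ↦ (x, f x)`. -/
def emb {n : ℕ} (f : EuclideanSpace ℝ (Fin n) → ℝ) (x : EuclideanSpace ℝ (Fin n)) :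
    EuclideanSpace ℝ (Fin (n + 1)) :=
  (EuclideanSpace.equiv (Fin (n + 1)) ℝ).symm (Fin.snoc (EuclideanSpace.equiv (Fin n) ℝ x) (f x))

lemma emb_castSucc {n : ℕ} (f : EuclideanSpace ℝ (Fin n) → ℝ) (x : EuclideanSpace ℝ (Fin n))
    (k : Fin n) : emb f x (Fin.castSucc k) = x k := by
  simp [emb, EuclideanSpace.equiv, Fin.snoc_castSucc]

lemma emb_last {n : ℕ} (f : EuclideanSpace ℝ (Fin n) → ℝ) (x : EuclideanSpace ℝ (Fin n)) :
    emb f x (Fin.last n) = f x := by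
  simp [emb, EuclideanSpace.equiv, Fin.snoc_last]

lemma graphOn_eq {n : ℕ} (K : Set (EuclideanSpace ℝ (Fin n))) (f : EuclideanSpace ℝ (Fin n) → ℝ) :
    graphOn K f = emb f '' K := rfl

set_option maxHeartbeats 2000000 in
lemma count_graph_le {n : ℕ} {K : Set (EuclideanSpace ℝ (Fin n))}
    {f : EuclideanSpace ℝ (Fin n) → ℝ} {c s : ℝ} (hc : 0 < c) (hs0 : 0 < s) (hs1 : s ≤ 1)
    (hHol : ∀ x ∈ K, ∀ y ∈ K, |f x - f y| ≤ c * dist x y ^ s)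
    {j j' : ℕ} (hjj' : (j:ℝ) ≤ (j':ℝ) * s) (hjj2 : j ≤ j')
    (hTfin : {m' : Fin (n+1) → ℤ | (dyadicCube (n+1) j m' ∩ graphOn K f).Nonempty}.Finite)
    (hSfin : {m : Fin n → ℤ | (dyadicCube n j' m ∩ K).Nonempty}.Finite) :
    hTfin.toFinset.card
      ≤ (2*(1+⌈c * (Real.sqrt n + 1)⌉₊)+2) ^ (n+1) * hSfin.toFinset.card := by
  classical
  set A : ℕ := 1 + ⌈c * (Real.sqrt n + 1)⌉₊ with hA
  set ρ : ℝ := (2:ℝ) ^ (-(j:ℤ)) with hρ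
  set ρ' : ℝ := (2:ℝ) ^ (-(j':ℤ)) with hρ'
  set T := hTfin.toFinset with hT
  -- witness function
  set X : (Fin (n+1) → ℤ) → EuclideanSpace ℝ (Fin n) :=
    fun m' => if h : ∃ x, x ∈ K ∧ emb f x ∈ dyadicCube (n+1) j m' then h.choose else 0 with hX
  have hXp : ∀ m' ∈ T, X m' ∈ K ∧ emb f (X m') ∈ dyadicCube (n+1) j m' := by
    intro m' hm'
    rw [hT, Set.Finite.mem_toFinset] at hm'
    obtain ⟨z, hz1, hz2⟩ := hm'
    rw [graphOn_eq] at hz2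
    obtain ⟨x, hx1, hx2⟩ := hz2
    have hex : ∃ x, x ∈ K ∧ emb f x ∈ dyadicCube (n+1) j m' := ⟨x, hx1, hx2 ▸ hz1⟩
    show (if h : ∃ x, x ∈ K ∧ emb f x ∈ dyadicCube (n+1) j m' then h.choose else 0) ∈ K ∧
      emb f (if h : ∃ x, x ∈ K ∧ emb f x ∈ dyadicCube (n+1) j m' then h.choose else 0)
        ∈ dyadicCube (n+1) j m'
    rw [dif_pos hex]
    exact hex.choose_spec
  set φ : (Fin (n+1) → ℤ) → (Fin n → ℤ) :=
    fun m' => fun i => round ((2:ℝ) ^ (j':ℕ) * X m' i) with hφ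
  have himg : T.image φ ⊆ hSfin.toFinset := by
    intro a ha
    rw [Finset.mem_image] at ha
    obtain ⟨m', hm', rfl⟩ := ha
    rw [Set.Finite.mem_toFinset]
    exact ⟨X m', mem_dyadicCube_round (X m'), (hXp m' hm').1⟩
  have hfib : ∀ a ∈ T.image φ, (T.filter (fun m' => φ m' = a)).card ≤ (2*A+2) ^ (n+1) := by
    intro a ha
    rw [Finset.mem_image] at ha
    obtain ⟨m'₀, hm'₀, hφ₀⟩ := ha
    apply card_close_le A (fun i => (m'₀ i : ℝ))
    intro m' hm'
    rw [Finset.mem_filter] at hm'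
    obtain ⟨hm'T, hφeq⟩ := hm'
    -- the two witnesses
    obtain ⟨hK1, hcube1⟩ := hXp m' hm'T
    obtain ⟨hK0, hcube0⟩ := hXp m'₀ hm'₀
    set x₁ := X m' with hx₁
    set x₂ := X m'₀ with hx₂
    -- coordinates of x₁, x₂ are close (both rounded to a at scale j')
    have hclose : ∀ k : Fin n, |x₁ k - x₂ k| ≤ ρ' := by
      intro k
      have h1 : x₁ ∈ dyadicCube n j' (φ m') := mem_dyadicCube_round x₁
      have h2 : x₂ ∈ dyadicCube n j' (φ m'₀) := mem_dyadicCube_round x₂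
      rw [hφeq] at h1
      rw [hφ₀] at h2
      have := h1 k
      have := h2 k
      have h3 := abs_sub_le (x₁ k) ((2:ℝ) ^ (-(j':ℤ)) * (a k : ℝ)) (x₂ k)
      rw [abs_sub_comm ((2:ℝ) ^ (-(j':ℤ)) * (a k : ℝ)) (x₂ k)] at h3
      rw [hρ']
      linarith
    have hρ'pos := rho_pos j'
    have hρpos := rho_pos j
    -- now bound each coordinate difference of m' and m'₀
    intro i
    -- cube conditions at scale j
    have hcu1 := hcube1 i
    have hcu2 := hcube0 i
    -- bound |emb f x₁ i - emb f x₂ i| * 2^j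
    have hyb : |emb f x₁ i - emb f x₂ i| * (2:ℝ) ^ (j:ℕ) ≤ (A : ℝ) - 1/2 := by
      have h2j : (0:ℝ) < (2:ℝ) ^ (j:ℕ) := by positivity
      refine Fin.lastCases ?_ (fun k => ?_) i
      · -- last coordinate : function values
        rw [emb_last, emb_last]
        have hd : dist x₁ x₂ ≤ Real.sqrt n * ρ' :=
          dist_le_of_coord (le_of_lt hρ'pos) hclose
        have hd2 : dist x₁ x₂ ≤ (Real.sqrt n + 1) * ρ' := by nlinarith [hρ'pos]
        have hf1 : |f x₁ - f x₂| ≤ c * ((Real.sqrt n + 1) * ρ') ^ s := by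
          calc |f x₁ - f x₂| ≤ c * dist x₁ x₂ ^ s := hHol x₁ hK1 x₂ hK0
            _ ≤ c * ((Real.sqrt n + 1) * ρ') ^ s := by
                apply mul_le_mul_of_nonneg_left _ (le_of_lt hc)
                exact Real.rpow_le_rpow dist_nonneg hd2 (le_of_lt hs0)
        have hsqn : (1:ℝ) ≤ Real.sqrt n + 1 := by linarith [Real.sqrt_nonneg (n:ℝ)]
        have hspl : ((Real.sqrt n + 1) * ρ') ^ s = (Real.sqrt n + 1) ^ s * ρ' ^ s :=
          Real.mul_rpow (by positivity) (le_of_lt hρ'pos)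
        have hexp : (Real.sqrt n + 1) ^ s ≤ Real.sqrt n + 1 := by
          nth_rewrite 2 [show Real.sqrt n + 1 = (Real.sqrt n + 1) ^ (1:ℝ) from
            (Real.rpow_one _).symm]
          exact Real.rpow_le_rpow_of_exponent_le hsqn hs1
        have hρ's : ρ' ^ s * (2:ℝ) ^ (j:ℕ) ≤ 1 := by
          rw [hρ', rho_rpow j' s]
          rw [show ((2:ℝ) ^ (j:ℕ)) = (2:ℝ) ^ ((j:ℕ):ℝ) from (Real.rpow_natCast 2 j).symm]
          rw [← Real.rpow_add (by norm_num)]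
          have : -(j':ℝ) * s + (j:ℝ) ≤ 0 := by nlinarith [hjj']
          calc (2:ℝ) ^ (-(j':ℝ) * s + (j:ℝ)) ≤ (2:ℝ) ^ (0:ℝ) :=
                Real.rpow_le_rpow_of_exponent_le (by norm_num) this
            _ = 1 := Real.rpow_zero 2
        have hcA : c * (Real.sqrt n + 1) ≤ (A:ℝ) - 1 := by
          rw [hA]
          push_cast
          have := Nat.le_ceil (c * (Real.sqrt n + 1))
          linarith
        have hρ'snn : (0:ℝ) ≤ ρ' ^ s := Real.rpow_nonneg (le_of_lt hρ'pos) s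
        calc |f x₁ - f x₂| * (2:ℝ) ^ (j:ℕ)
            ≤ c * ((Real.sqrt n + 1) ^ s * ρ' ^ s) * (2:ℝ) ^ (j:ℕ) := by
              rw [← hspl]
              exact mul_le_mul_of_nonneg_right hf1 (le_of_lt h2j)
          _ ≤ c * ((Real.sqrt n + 1) * ρ' ^ s) * (2:ℝ) ^ (j:ℕ) := by
              apply mul_le_mul_of_nonneg_right _ (le_of_lt h2j)
              apply mul_le_mul_of_nonneg_left _ (le_of_lt hc)
              exact mul_le_mul_of_nonneg_right hexp hρ'snn
          _ = c * (Real.sqrt n + 1) * (ρ' ^ s * (2:ℝ) ^ (j:ℕ)) := by ring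
          _ ≤ c * (Real.sqrt n + 1) * 1 := by
              apply mul_le_mul_of_nonneg_left hρ's (by positivity)
          _ ≤ (A:ℝ) - 1 := by rw [mul_one]; exact hcA
          _ ≤ (A:ℝ) - 1/2 := by linarith
      · -- earlier coordinates
        rw [emb_castSucc, emb_castSucc]
        have h1 : |x₁ k - x₂ k| ≤ ρ' := hclose k
        have hρ'ρ : ρ' * (2:ℝ) ^ (j:ℕ) ≤ 1 := by
          have hmono : ρ' ≤ ρ := by
            rw [hρ, hρ']
            exact zpow_le_zpow_right₀ (by norm_num) (by omega)
          have hmp' : ρ * (2:ℝ) ^ (j:ℕ) = 1 := by rw [hρ]; exact rho_mul_pow j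
          nlinarith [hmono, h2j]
        have hA1 : (2:ℝ) ≤ (A:ℝ) := by
          have hcn : (0:ℝ) < c * (Real.sqrt n + 1) := by
            have := Real.sqrt_nonneg (n:ℝ); nlinarith
          have h1A : (2:ℕ) ≤ A := by
            rw [hA]
            have : 1 ≤ ⌈c * (Real.sqrt n + 1)⌉₊ := Nat.one_le_ceil_iff.2 hcn
            omega
          exact_mod_cast h1A
        calc |x₁ k - x₂ k| * (2:ℝ) ^ (j:ℕ) ≤ ρ' * (2:ℝ) ^ (j:ℕ) :=
              mul_le_mul_of_nonneg_right h1 (le_of_lt h2j)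
          _ ≤ 1 := hρ'ρ
          _ ≤ (A:ℝ) - 1/2 := by linarith
    -- combine: |m' i - m'₀ i| ≤ |y₁ i - y₂ i| * 2^j + 1 ≤ A + 1/2
    have hmp : ρ * (2:ℝ) ^ (j:ℕ) = 1 := by rw [hρ]; exact rho_mul_pow j
    have h2j : (0:ℝ) < (2:ℝ) ^ (j:ℕ) := by positivity
    have hdiff : |ρ * (m' i : ℝ) - ρ * (m'₀ i : ℝ)| ≤ |emb f x₁ i - emb f x₂ i| + ρ := by
      have t1 := abs_sub_le (ρ * (m' i : ℝ)) (emb f x₁ i) (ρ * (m'₀ i : ℝ))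
      have t2 := abs_sub_le (emb f x₁ i) (emb f x₂ i) (ρ * (m'₀ i : ℝ))
      rw [abs_sub_comm (ρ * (m' i : ℝ)) (emb f x₁ i)] at t1
      linarith
    have heqq : |(m' i : ℝ) - (m'₀ i : ℝ)| = |ρ * (m' i : ℝ) - ρ * (m'₀ i : ℝ)| * (2:ℝ) ^ (j:ℕ) := by
      rw [show ρ * (m' i : ℝ) - ρ * (m'₀ i : ℝ) = ρ * ((m' i : ℝ) - (m'₀ i : ℝ)) from by ring]
      rw [abs_mul, abs_of_pos hρpos, mul_comm ρ, mul_assoc, hmp, mul_one]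
    calc |(m' i : ℝ) - (m'₀ i : ℝ)|
        = |ρ * (m' i : ℝ) - ρ * (m'₀ i : ℝ)| * (2:ℝ) ^ (j:ℕ) := heqq
      _ ≤ (|emb f x₁ i - emb f x₂ i| + ρ) * (2:ℝ) ^ (j:ℕ) := by
          apply mul_le_mul_of_nonneg_right hdiff (le_of_lt h2j)
      _ = |emb f x₁ i - emb f x₂ i| * (2:ℝ) ^ (j:ℕ) + ρ * (2:ℝ) ^ (j:ℕ) := by ring
      _ ≤ ((A:ℝ) - 1/2) + 1 := by
          rw [hmp]
          linarith [hyb]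
      _ = (A:ℝ) + 1/2 := by ring
  calc T.card ≤ (2*A+2) ^ (n+1) * (T.image φ).card :=
        Finset.card_le_mul_card_image T ((2*A+2) ^ (n+1)) hfib
    _ ≤ (2*A+2) ^ (n+1) * hSfin.toFinset.card :=
        Nat.mul_le_mul_left _ (Finset.card_le_card himg)

end BoxAux

open BoxAux Filter

/-- If `0 < s ≤ 1`, `K` is a `d`-set in `ℝⁿ` with `0 < d ≤ n`, and `f` is Hölder continuous of
exponent `s` on `K`, then the upper box counting dimension of `Γ(f)` is at most `d / s`. -/
theorem upperBoxDim_graph_le_div_of_holder {n : ℕ} (s : ℝ) (hs0 : 0 < s) (hs1 : s ≤ 1)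
    (d : ℝ) (hd0 : 0 < d) (hdn : d ≤ n)
    (μ : Measure (EuclideanSpace ℝ (Fin n))) (K : Set (EuclideanSpace ℝ (Fin n)))
    (hK : IsDSet d μ K) (f : EuclideanSpace ℝ (Fin n) → ℝ)
    (hf : ∃ c : ℝ, 0 < c ∧ ∀ x ∈ K, ∀ y ∈ K, |f x - f y| ≤ c * dist x y ^ s) :
    upperBoxDim (graphOn K f) ≤ d / s := by
  classical
  obtain ⟨hKcomp, hμK, hsupp, hμ0, hμtop, c₁, c₂, hc₁, hc₂, hmass⟩ := hK
  obtain ⟨c, hc, hHol⟩ := hf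
  have hds : 0 < d / s := div_pos hd0 hs0
  rcases K.eq_empty_or_nonempty with hKe | ⟨x₀, hx₀⟩
  · -- empty case
    have hΓ : graphOn K f = ∅ := by rw [graphOn_eq, hKe, Set.image_empty]
    have hbc : ∀ j : ℕ, boxCount (graphOn K f) j = 0 := by
      intro j
      rw [boxCount, hΓ]
      simp
    rw [upperBoxDim]
    have heq : (fun j : ℕ => Real.logb 2 (boxCount (graphOn K f) j) / j)
        = fun _j : ℕ => (0:ℝ) := by
      funext j; rw [hbc j]; simp
    rw [heq, limsup_const]
    exact le_of_lt hds
  · -- K nonempty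
    obtain ⟨R₀, hR₀⟩ := hKcomp.isBounded.subset_closedBall 0
    set R := max R₀ 0 with hR
    have hRnn : (0:ℝ) ≤ R := le_max_right _ _
    have hKR : ∀ x ∈ K, ∀ i, |x i| ≤ R := by
      intro x hx i
      have h1 := coord_le_dist x 0 i
      have h2 : dist x 0 ≤ R₀ := by simpa [Metric.mem_closedBall] using hR₀ hx
      have h0 : (0 : EuclideanSpace ℝ (Fin n)) i = 0 := rfl
      rw [h0, sub_zero] at h1
      exact le_trans h1 (le_trans h2 (le_max_left _ _))
    have hKdist : ∀ x ∈ K, dist x 0 ≤ R := by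
      intro x hx
      have h2 : dist x 0 ≤ R₀ := by simpa [Metric.mem_closedBall] using hR₀ hx
      exact le_trans h2 (le_max_left _ _)
    -- f bounded on K
    set Mf : ℝ := |f x₀| + c * (2*R+1) ^ s with hMf
    have hfb : ∀ x ∈ K, |f x| ≤ Mf := by
      intro x hx
      have h1 := hHol x hx x₀ hx₀
      have h2 : dist x x₀ ≤ 2 * R := by
        have ht := dist_triangle_right x x₀ 0
        have hx1 := hKdist x hx
        have hx2 := hKdist x₀ hx₀
        linarith
      have h3 : dist x x₀ ^ s ≤ (2*R+1) ^ s :=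
        Real.rpow_le_rpow dist_nonneg (by linarith) (le_of_lt hs0)
      have h4 := abs_sub_abs_le_abs_sub (f x) (f x₀)
      have h5 : c * dist x x₀ ^ s ≤ c * (2*R+1) ^ s :=
        mul_le_mul_of_nonneg_left h3 (le_of_lt hc)
      rw [hMf]
      linarith
    set Rg : ℝ := max R Mf with hRg
    have hΓR : ∀ z ∈ graphOn K f, ∀ i, |z i| ≤ Rg := by
      intro z hz i
      rw [graphOn_eq] at hz
      obtain ⟨x, hx, rfl⟩ := hz
      refine Fin.lastCases ?_ (fun k => ?_) i
      · rw [emb_last]; exact le_trans (hfb x hx) (le_max_right _ _)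
      · rw [emb_castSucc]; exact le_trans (hKR x hx k) (le_max_left _ _)
    -- constants
    set V : ℝ := (μ Set.univ).toReal with hV
    have hVpos : 0 < V := ENNReal.toReal_pos (ne_of_gt hμ0) (ne_of_lt hμtop)
    set B : ℕ := (2*(1+⌈c * (Real.sqrt n + 1)⌉₊)+2) ^ (n+1) with hB
    have hBpos : 0 < B := by positivity
    set C₂ : ℝ := (B:ℝ) * (4^n * V / c₁) with hC₂
    have hC₂pos : 0 < C₂ := by
      rw [hC₂]
      have : (0:ℝ) < (B:ℝ) := by exact_mod_cast hBpos
      positivity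
    set C₃ : ℝ := C₂ * (2:ℝ) ^ (d:ℝ) with hC₃
    have hC₃pos : 0 < C₃ := by
      rw [hC₃]
      have := Real.rpow_pos_of_pos (by norm_num : (0:ℝ) < 2) d
      positivity
    -- key counting estimate
    have key : ∀ j : ℕ, (boxCount (graphOn K f) j : ℝ) ≤ C₃ * (2:ℝ) ^ ((j:ℝ) * d / s) := by
      intro j
      set j' : ℕ := ⌈(j:ℝ)/s⌉₊ with hj'def
      have hjj' : (j:ℝ) ≤ (j':ℝ) * s := by
        have h1 := Nat.le_ceil ((j:ℝ)/s)
        rw [div_le_iff₀ hs0] at h1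
        exact h1
      have hjj2 : j ≤ j' := by
        have h2 : (j:ℝ) ≤ (j':ℝ) := by nlinarith [hjj', Nat.cast_nonneg (α := ℝ) j', hs1]
        exact_mod_cast h2
      have hSfin := finite_cubeSet (j := j') hKR
      have hTfin := finite_cubeSet (j := j) hΓR
      have hmass' : ∀ x ∈ K, ENNReal.ofReal (c₁ * ((2:ℝ) ^ (-(j':ℤ))) ^ d)
          ≤ μ (closedBall x ((2:ℝ) ^ (-(j':ℤ)))) := by
        intro x hx
        exact (hmass _ ⟨rho_pos j', rho_le_one j'⟩ x hx).1
      have hcount := count_le_of_mass hSfin hmass'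
      -- scale factor
      set P : ℝ := (2:ℝ) ^ ((j':ℝ) * d) with hP
      have hPpos : 0 < P := Real.rpow_pos_of_pos (by norm_num) _
      have hρ'd : ((2:ℝ) ^ (-(j':ℤ))) ^ d = P⁻¹ := by
        rw [rho_rpow j' d, hP, neg_mul, Real.rpow_neg (by norm_num)]
      -- convert the measure bound to the reals
      have hSreal : (hSfin.toFinset.card : ℝ) * (c₁ * P⁻¹) ≤ 4^n * V := by
        have hne : (4:ENNReal)^n * μ Set.univ ≠ ⊤ :=
          ENNReal.mul_ne_top (by simp) (ne_of_lt hμtop)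
        have h6 := ENNReal.toReal_mono hne hcount
        rw [ENNReal.toReal_mul, ENNReal.toReal_mul, ENNReal.toReal_natCast,
          ENNReal.toReal_ofReal (by positivity), ENNReal.toReal_pow, ENNReal.toReal_ofNat] at h6
        rw [hρ'd] at h6
        exact h6
      have hcardS : (hSfin.toFinset.card : ℝ) ≤ (4^n * V / c₁) * P := by
        rw [div_mul_eq_mul_div, le_div_iff₀ hc₁]
        calc (hSfin.toFinset.card : ℝ) * c₁
            = ((hSfin.toFinset.card : ℝ) * (c₁ * P⁻¹)) * P := by
              field_simp
          _ ≤ (4^n * V) * P := mul_le_mul_of_nonneg_right hSreal (le_of_lt hPpos)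
      have hT := count_graph_le hc hs0 hs1 hHol hjj' hjj2 hTfin hSfin
      have hbcT : boxCount (graphOn K f) j = hTfin.toFinset.card :=
        Set.ncard_eq_toFinset_card _ hTfin
      have h1 : (boxCount (graphOn K f) j : ℝ) ≤ (B:ℝ) * (hSfin.toFinset.card : ℝ) := by
        rw [hbcT]
        exact_mod_cast hT
      have h2 : (boxCount (graphOn K f) j : ℝ) ≤ C₂ * P := by
        calc (boxCount (graphOn K f) j : ℝ) ≤ (B:ℝ) * (hSfin.toFinset.card : ℝ) := h1
          _ ≤ (B:ℝ) * ((4^n * V / c₁) * P) :=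
              mul_le_mul_of_nonneg_left hcardS (Nat.cast_nonneg B)
          _ = C₂ * P := by rw [hC₂]; ring
      have hj'le : (j':ℝ) ≤ (j:ℝ)/s + 1 := le_of_lt (Nat.ceil_lt_add_one (by positivity))
      have hPle : P ≤ (2:ℝ) ^ ((j:ℝ) * d / s) * (2:ℝ) ^ (d:ℝ) := by
        rw [hP, ← Real.rpow_add (by norm_num)]
        apply Real.rpow_le_rpow_of_exponent_le one_le_two
        have heqd : (j:ℝ) * d / s + d = ((j:ℝ)/s + 1) * d := by
          field_simp
        rw [heqd]
        exact mul_le_mul_of_nonneg_right hj'le (le_of_lt hd0)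
      calc (boxCount (graphOn K f) j : ℝ) ≤ C₂ * P := h2
        _ ≤ C₂ * ((2:ℝ) ^ ((j:ℝ) * d / s) * (2:ℝ) ^ (d:ℝ)) :=
            mul_le_mul_of_nonneg_left hPle (le_of_lt hC₂pos)
        _ = C₃ * (2:ℝ) ^ ((j:ℝ) * d / s) := by rw [hC₃]; ring
    -- from counting estimate to the limsup bound
    set A₂ : ℝ := max (Real.logb 2 C₃) 0 with hA₂
    have hA₂nn : 0 ≤ A₂ := le_max_right _ _
    have hF : ∀ j : ℕ, 1 ≤ j →
        Real.logb 2 (boxCount (graphOn K f) j) / j ≤ d/s + A₂/j := by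
      intro j hj
      have hjpos : (0:ℝ) < (j:ℝ) := by exact_mod_cast hj
      rcases Nat.eq_zero_or_pos (boxCount (graphOn K f) j) with h0 | hpos
      · rw [h0]
        simp only [Nat.cast_zero, Real.logb_zero, zero_div]
        positivity
      · have hc1 : (1:ℝ) ≤ (boxCount (graphOn K f) j : ℝ) := by exact_mod_cast hpos
        have h2 := key j
        have hrp : (0:ℝ) < (2:ℝ) ^ ((j:ℝ) * d / s) := Real.rpow_pos_of_pos (by norm_num) _
        have h3 : Real.logb 2 (boxCount (graphOn K f) j)
            ≤ Real.logb 2 (C₃ * (2:ℝ) ^ ((j:ℝ) * d / s)) :=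
          (Real.logb_le_logb (by norm_num) (by linarith) (by positivity)).2 h2
        have h4 : Real.logb 2 (C₃ * (2:ℝ) ^ ((j:ℝ) * d / s))
            = Real.logb 2 C₃ + (j:ℝ) * d / s := by
          rw [Real.logb_mul (ne_of_gt hC₃pos) (ne_of_gt hrp),
            Real.logb_rpow (by norm_num) (by norm_num)]
        rw [h4] at h3
        have h5 : Real.logb 2 (boxCount (graphOn K f) j) / j
            ≤ (Real.logb 2 C₃ + (j:ℝ) * d / s) / j := by
          exact div_le_div_of_nonneg_right h3 hjpos.le
        have h6 : (Real.logb 2 C₃ + (j:ℝ) * d / s) / j = Real.logb 2 C₃ / j + d / s := by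
          field_simp
        rw [h6] at h5
        have h7 : Real.logb 2 C₃ / j ≤ A₂ / j := by
          exact div_le_div_of_nonneg_right (le_max_left _ _) hjpos.le
        linarith
    have hFnn : ∀ j : ℕ, 0 ≤ Real.logb 2 (boxCount (graphOn K f) j) / j := by
      intro j
      apply div_nonneg _ (Nat.cast_nonneg j)
      rcases Nat.eq_zero_or_pos (boxCount (graphOn K f) j) with h0 | hpos
      · rw [h0]; simp
      · exact Real.logb_nonneg one_lt_two (by exact_mod_cast hpos)
    rw [upperBoxDim]
    have hg : Tendsto (fun j : ℕ => d/s + A₂/(j:ℝ)) atTop (nhds (d/s)) := by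
      have h0 := tendsto_const_div_atTop_nhds_zero_nat A₂
      have := Tendsto.add (tendsto_const_nhds (x := d/s) (f := atTop)) h0
      simpa using this
    have hle : (fun j : ℕ => Real.logb 2 (boxCount (graphOn K f) j) / j)
        ≤ᶠ[atTop] (fun j : ℕ => d/s + A₂/(j:ℝ)) :=
      eventually_atTop.2 ⟨1, fun j hj => hF j hj⟩
    have hbd : IsBoundedUnder (fun x1 x2 => x1 ≥ x2) atTop
        (fun j : ℕ => Real.logb 2 (boxCount (graphOn K f) j) / j) :=
      ⟨0, eventually_map.2 (Eventually.of_forall hFnn)⟩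
    calc limsup (fun j : ℕ => Real.logb 2 (boxCount (graphOn K f) j) / j) atTop
        ≤ limsup (fun j : ℕ => d/s + A₂/(j:ℝ)) atTop :=
          limsup_le_limsup hle hbd.isCoboundedUnder_le hg.isBoundedUnder_le
      _ = d/s := hg.limsup_eq

end
end
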